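/- arXiv:1306.3587 — 5 statements merged into one kernel-verified Lean document; each statement's English description precedes it below -/
import Mathlib

section
/- For every bounded function f : ℕ^Λ → ℝ, the series ∑_{η∈ℕ^Λ} ν_φ^Λ(η)·(Lf)(η) converges absolutely and equals 0; that is, every product measure ν_φ^Λ built from a function λ harmonic for p is a stationary measure for the zero-range process. -/
open Filter Topology

/-- Stationary weights of the zero-range process: `w x 0 = 1`,
`w x n = ∏_{k=1}^n 1 / u x k`. -/
noncomputable def zrpWeight (u : ℕ → ℝ) (n : ℕ) : ℝ :=
  ∏ k ∈ Finset.Icc 1 n, (u k)⁻¹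

/-- The configuration `η^{xy}` obtained from `η` by moving one particle from `x` to `y`. -/
def moveConf {Λ : Type*} [DecidableEq Λ] (η : Λ → ℕ) (x y : Λ) : Λ → ℕ :=
  fun z => η z - (if z = x then 1 else 0) + (if z = y then 1 else 0)

/-- Normalization constant. -/
noncomputable def zrpZ (u : ℕ → ℝ) (c : ℝ) : ℝ := ∑' n, zrpWeight u n * c ^ n

/-- Single-site marginal. -/
noncomputable def zrpG (u : ℕ → ℝ) (c : ℝ) (n : ℕ) : ℝ :=
  zrpWeight u n * c ^ n / zrpZ u c

/-- Adding one particle at site `x`. -/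
def zrpAddOne {Λ : Type*} [DecidableEq Λ] (x : Λ) (η : Λ → ℕ) : Λ → ℕ :=
  Function.update η x (η x + 1)

lemma zrpAddOne_injective {Λ : Type*} [DecidableEq Λ] (x : Λ) :
    Function.Injective (zrpAddOne x) := by
  intro a b hab
  funext w
  rcases eq_or_ne w x with rfl | hw
  · have := congrFun hab w
    simp only [zrpAddOne, Function.update_self] at this
    omega
  · have := congrFun hab w
    simpa [zrpAddOne, Function.update_of_ne hw] using this

lemma zrpAddOne_mem_range {Λ : Type*} [DecidableEq Λ] (x : Λ) (η : Λ → ℕ)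
    (h : η x ≠ 0) : η ∈ Set.range (zrpAddOne x) := by
  refine ⟨Function.update η x (η x - 1), ?_⟩
  funext w
  rcases eq_or_ne w x with rfl | hw
  · simp only [zrpAddOne, Function.update_self]
    omega
  · simp [zrpAddOne, Function.update_of_ne hw]

lemma moveConf_zrpAddOne {Λ : Type*} [DecidableEq Λ] (x y : Λ) (ζ : Λ → ℕ) :
    moveConf (zrpAddOne x ζ) x y = zrpAddOne y ζ := by
  funext w
  rcases eq_or_ne w x with rfl | hwx
  · rcases eq_or_ne w y with rfl | hwy
    · simp [moveConf, zrpAddOne]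
    · simp [moveConf, zrpAddOne, hwy] <;> omega
  · rcases eq_or_ne w y with rfl | hwy
    · simp [moveConf, zrpAddOne, hwx] <;> omega
    · simp [moveConf, zrpAddOne, Function.update_of_ne hwx,
        Function.update_of_ne hwy, if_neg hwx, if_neg hwy]

section marginal

variable {u : ℕ → ℝ} {c : ℝ}

lemma zrpWeight_pos (hu : ∀ k : ℕ, k ≠ 0 → 0 < u k) (n : ℕ) : 0 < zrpWeight u n := by
  refine Finset.prod_pos fun k hk => ?_
  have hk1 : k ≠ 0 := by
    have := (Finset.mem_Icc.mp hk).1; omega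
  exact inv_pos.mpr (hu k hk1)

lemma zrpTerm_nonneg (hu : ∀ k : ℕ, k ≠ 0 → 0 < u k) (hc : 0 < c) (n : ℕ) :
    0 ≤ zrpWeight u n * c ^ n :=
  mul_nonneg (zrpWeight_pos hu n).le (pow_nonneg hc.le n)

lemma zrpZ_pos (hu : ∀ k : ℕ, k ≠ 0 → 0 < u k) (hc : 0 < c)
    (hs : Summable fun n => zrpWeight u n * c ^ n) : 0 < zrpZ u c := by
  have h1 := Summable.le_tsum hs 0 (fun n _ => zrpTerm_nonneg hu hc n)
  have h0 : zrpWeight u 0 * c ^ 0 = 1 := by simp [zrpWeight]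
  rw [h0] at h1
  rw [zrpZ]
  linarith

lemma zrpG_nonneg (hu : ∀ k : ℕ, k ≠ 0 → 0 < u k) (hc : 0 < c)
    (hs : Summable fun n => zrpWeight u n * c ^ n) (n : ℕ) : 0 ≤ zrpG u c n :=
  div_nonneg (zrpTerm_nonneg hu hc n) (zrpZ_pos hu hc hs).le

lemma zrpG_summable (hs : Summable fun n => zrpWeight u n * c ^ n) :
    Summable (zrpG u c) := hs.div_const _

lemma zrpG_step (hu : ∀ k : ℕ, k ≠ 0 → 0 < u k) (hc : 0 < c)
    (hs : Summable fun n => zrpWeight u n * c ^ n) (n : ℕ) :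
    zrpG u c (n + 1) * u (n + 1) = c * zrpG u c n := by
  have hune : u (n + 1) ≠ 0 := (hu (n + 1) (Nat.succ_ne_zero n)).ne'
  have hzne : zrpZ u c ≠ 0 := (zrpZ_pos hu hc hs).ne'
  have hw : zrpWeight u (n + 1) = zrpWeight u n * (u (n + 1))⁻¹ := by
    rw [zrpWeight, zrpWeight, Finset.prod_Icc_succ_top (Nat.le_add_left 1 n)]
  rw [zrpG, zrpG, hw, pow_succ]
  field_simp

end marginal

/-- Summability of products over `Fin n → ℕ`. -/
lemma summable_pi_fin : ∀ (n : ℕ) (g : Fin n → ℕ → ℝ), (∀ i k, 0 ≤ g i k) →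
    (∀ i, Summable (g i)) → Summable (fun η : Fin n → ℕ => ∏ i, g i (η i)) := by
  intro n
  induction n with
  | zero =>
    intro g _ _
    have h : (fun η : Fin 0 → ℕ => ∏ i, g i (η i)) = fun _ => 1 := by
      funext η; simp
    rw [h]
    exact summable_of_finite_support (Set.toFinite _)
  | succ n ih =>
    intro g hg0 hgs
    have h2 : Summable (fun η : Fin n → ℕ => ∏ i, g i.succ (η i)) :=
      ih _ (fun i k => hg0 _ _) (fun i => hgs _)
    have a1 : (0 : ℕ → ℝ) ≤ g 0 := fun k => hg0 _ _
    have a2 : (0 : (Fin n → ℕ) → ℝ) ≤ (fun η : Fin n → ℕ => ∏ i, g i.succ (η i)) :=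
      fun η => Finset.prod_nonneg fun i _ => hg0 _ _
    have h1 := Summable.mul_of_nonneg (hgs 0) h2 a1 a2
    refine ((Fin.consEquiv (fun _ => ℕ)).summable_iff).mp ?_
    refine h1.congr (fun q => ?_)
    simp only [Function.comp]
    rw [Fin.prod_univ_succ]
    congr 1 <;> simp [Fin.consEquiv]

lemma summable_pi {Λ : Type*} [Fintype Λ] (g : Λ → ℕ → ℝ) (hg0 : ∀ x k, 0 ≤ g x k)
    (hgs : ∀ x, Summable (g x)) : Summable (fun η : Λ → ℕ => ∏ x, g x (η x)) := by
  classical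
  have h2 : ((fun η : Λ → ℕ => ∏ x, g x (η x)) ∘
      (Equiv.arrowCongr (Fintype.equivFin Λ).symm (Equiv.refl ℕ))) =
      fun η' : Fin (Fintype.card Λ) → ℕ => ∏ i, g ((Fintype.equivFin Λ).symm i) (η' i) := by
    funext η'
    simp only [Function.comp]
    refine Fintype.prod_equiv (Fintype.equivFin Λ) _ _ (fun x => ?_)
    simp [Equiv.arrowCongr]
  refine (Equiv.arrowCongr (Fintype.equivFin Λ).symm (Equiv.refl ℕ)).summable_iff.mp ?_
  rw [h2]
  exact summable_pi_fin _ _ (fun i k => hg0 _ _) (fun i => hgs _)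

/-- The harmonicity cancellation. -/
lemma zrp_harm_cancel {Λ : Type*} [Fintype Λ] (p : Λ → Λ → ℝ) (lam F : Λ → ℝ) (φ : ℝ)
    (hh : ∀ y : Λ, ∑ x, lam x * p x y = ∑ x, lam y * p y x) :
    ∑ x : Λ, ∑ y : Λ, p x y * lam x * φ * (F y - F x) = 0 := by
  have hsplit : ∀ x y : Λ, p x y * lam x * φ * (F y - F x) =
      p x y * lam x * φ * F y - p x y * lam x * φ * F x := fun x y => by ring
  simp only [hsplit, Finset.sum_sub_distrib]
  rw [sub_eq_zero, Finset.sum_comm]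
  refine Finset.sum_congr rfl fun y _ => ?_
  calc ∑ x, p x y * lam x * φ * F y
      = (∑ x, lam x * p x y) * (φ * F y) := by
        rw [Finset.sum_mul]; exact Finset.sum_congr rfl fun x _ => by ring
    _ = (∑ x, lam y * p y x) * (φ * F y) := by rw [hh y]
    _ = ∑ x, p y x * lam y * φ * F y := by
        rw [Finset.sum_mul]; exact Finset.sum_congr rfl fun x _ => by ring

/-- For every bounded `f : ℕ^Λ → ℝ`, the series `∑_η ν_φ^Λ(η)·(Lf)(η)` converges
absolutely and equals `0`: product measures built from a function `lam` harmonic for `p`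
are stationary for the zero-range process. -/
theorem zrp_product_measure_stationary
    {Λ : Type*} [Fintype Λ] [DecidableEq Λ] [Nonempty Λ]
    (p : Λ → Λ → ℝ) (hp : ∀ x y, 0 ≤ p x y) (hpdiag : ∀ x, p x x = 0)
    (lam : Λ → ℝ) (hlam : ∀ x, 0 < lam x)
    (hharm : ∀ y : Λ, ∑ x, (lam x * p x y - lam y * p y x) = 0)
    (u : Λ → ℕ → ℝ) (hupos : ∀ x n, 0 ≤ u x n)
    (huzero : ∀ x n, u x n = 0 ↔ n = 0)
    (φ : ℝ) (hφ : 0 < φ)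
    (hz : ∀ x : Λ, Summable (fun n => zrpWeight (u x) n * (lam x * φ) ^ n))
    (ν : (Λ → ℕ) → ℝ)
    (hν : ∀ η, ν η = ∏ x, zrpWeight (u x) (η x) * (lam x * φ) ^ (η x) /
        (∑' n, zrpWeight (u x) n * (lam x * φ) ^ n))
    (f : (Λ → ℕ) → ℝ) (hf : ∃ M, ∀ η, |f η| ≤ M) :
    Summable (fun η : Λ → ℕ =>
      |ν η * ∑ x, ∑ y, p x y * u x (η x) * (f (moveConf η x y) - f η)|) ∧
    ∑' η : Λ → ℕ, ν η * ∑ x, ∑ y, p x y * u x (η x) * (f (moveConf η x y) - f η) = 0 := by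
  classical
  obtain ⟨M, hM⟩ := hf
  have hlamphi : ∀ x, 0 < lam x * φ := fun x => mul_pos (hlam x) hφ
  have hupos' : ∀ x, ∀ k : ℕ, k ≠ 0 → 0 < u x k := fun x k hk =>
    lt_of_le_of_ne (hupos x k) (fun h => hk ((huzero x k).mp h.symm))
  have hν_eq : ∀ η, ν η = ∏ x, zrpG (u x) (lam x * φ) (η x) := hν
  have hν_nonneg : ∀ η, 0 ≤ ν η := by
    intro η; rw [hν_eq]
    exact Finset.prod_nonneg fun x _ =>
      zrpG_nonneg (hupos' x) (hlamphi x) (hz x) (η x)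
  have hν_summable : Summable ν := by
    have := summable_pi (fun x => zrpG (u x) (lam x * φ))
      (fun x n => zrpG_nonneg (hupos' x) (hlamphi x) (hz x) n)
      (fun x => zrpG_summable (hz x))
    exact this.congr (fun η => (hν_eq η).symm)
  -- the key change-of-variables identity
  have hkey : ∀ (x : Λ) (ζ : Λ → ℕ),
      ν (zrpAddOne x ζ) * u x (ζ x + 1) = lam x * φ * ν ζ := by
    intro x ζ
    rw [hν_eq, hν_eq]
    rw [← Finset.mul_prod_erase Finset.univ _ (Finset.mem_univ x),
        ← Finset.mul_prod_erase Finset.univ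
          (fun y => zrpG (u y) (lam y * φ) (ζ y)) (Finset.mem_univ x)]
    have h1 : ∏ y ∈ Finset.univ.erase x, zrpG (u y) (lam y * φ) (zrpAddOne x ζ y) =
        ∏ y ∈ Finset.univ.erase x, zrpG (u y) (lam y * φ) (ζ y) := by
      refine Finset.prod_congr rfl fun y hy => ?_
      have hyx : y ≠ x := (Finset.mem_erase.mp hy).1
      simp [zrpAddOne, Function.update_of_ne hyx]
    have h2 : zrpAddOne x ζ x = ζ x + 1 := by simp [zrpAddOne]
    rw [h1, h2, mul_comm (zrpG (u x) (lam x * φ) (ζ x + 1)) _, mul_assoc,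
      zrpG_step (hupos' x) (hlamphi x) (hz x) (ζ x)]
    ring
  -- generic summability of ν·B for bounded B
  have hsum_b : ∀ B : (Λ → ℕ) → ℝ, (∀ η, |B η| ≤ M) →
      Summable (fun ζ => ν ζ * B ζ) := by
    intro B hB
    refine summable_abs_iff.mp ?_
    refine Summable.of_nonneg_of_le (fun _ => abs_nonneg _) (fun ζ => ?_)
      (hν_summable.mul_right M)
    rw [abs_mul, abs_of_nonneg (hν_nonneg ζ)]
    exact mul_le_mul_of_nonneg_left (hB _) (hν_nonneg ζ)
  -- main change of variables
  have main : ∀ (x : Λ) (B : (Λ → ℕ) → ℝ), (∀ η, |B η| ≤ M) →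
      Summable (fun η => ν η * u x (η x) * B η) ∧
      ∑' η, ν η * u x (η x) * B η =
        lam x * φ * ∑' ζ, ν ζ * B (zrpAddOne x ζ) := by
    intro x B hB
    have hoff : ∀ η ∉ Set.range (zrpAddOne x), ν η * u x (η x) * B η = 0 := by
      intro η hη
      have hx0 : η x = 0 := by
        by_contra h
        exact hη (zrpAddOne_mem_range x η h)
      have hu0 : u x (η x) = 0 := by rw [hx0]; exact (huzero x 0).mpr rfl
      rw [hu0]; ring
    have hcomp : ∀ ζ, ν (zrpAddOne x ζ) * u x (zrpAddOne x ζ x) * B (zrpAddOne x ζ) =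
        lam x * φ * (ν ζ * B (zrpAddOne x ζ)) := by
      intro ζ
      have h2 : zrpAddOne x ζ x = ζ x + 1 := by simp [zrpAddOne]
      rw [h2, hkey x ζ]
      ring
    have hsum_comp : Summable ((fun η => ν η * u x (η x) * B η) ∘ zrpAddOne x) := by
      refine ((hsum_b (fun ζ => B (zrpAddOne x ζ)) (fun ζ => hB _)).mul_left
        (lam x * φ)).congr (fun ζ => ?_)
      simp only [Function.comp]
      rw [hcomp]
    constructor
    · exact ((zrpAddOne_injective x).summable_iff hoff).mp hsum_comp
    · have hsupp : Function.support (fun η => ν η * u x (η x) * B η) ⊆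
          Set.range (zrpAddOne x) := by
        intro η hη
        by_contra h
        exact hη (hoff η h)
      rw [← (zrpAddOne_injective x).tsum_eq hsupp]
      rw [tsum_congr hcomp, tsum_mul_left]
  -- per-pair results
  have hpair : ∀ x y : Λ,
      Summable (fun η => ν η * (p x y * u x (η x) * (f (moveConf η x y) - f η))) ∧
      ∑' η, ν η * (p x y * u x (η x) * (f (moveConf η x y) - f η)) =
        p x y * lam x * φ *
          ((∑' ζ, ν ζ * f (zrpAddOne y ζ)) - (∑' ζ, ν ζ * f (zrpAddOne x ζ))) := by
    intro x y
    obtain ⟨hS1, hT1⟩ := main x (fun η => f (moveConf η x y)) (fun η => hM _)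
    obtain ⟨hS2, hT2⟩ := main x f (fun η => hM _)
    have hT1' : ∑' η, ν η * u x (η x) * f (moveConf η x y) =
        lam x * φ * ∑' ζ, ν ζ * f (zrpAddOne y ζ) := by
      rw [hT1]
      congr 1
      refine tsum_congr fun ζ => ?_
      rw [moveConf_zrpAddOne]
    have heq : ∀ η, ν η * (p x y * u x (η x) * (f (moveConf η x y) - f η)) =
        p x y * (ν η * u x (η x) * f (moveConf η x y)) -
        p x y * (ν η * u x (η x) * f η) := fun η => by ring
    constructor
    · exact (((hS1.mul_left (p x y)).sub (hS2.mul_left (p x y)))).congr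
        (fun η => (heq η).symm)
    · rw [tsum_congr heq, Summable.tsum_sub (hS1.mul_left _) (hS2.mul_left _),
        tsum_mul_left, tsum_mul_left, hT1', hT2]
      ring
  -- assemble
  have heq : ∀ η : Λ → ℕ,
      ν η * ∑ x, ∑ y, p x y * u x (η x) * (f (moveConf η x y) - f η) =
      ∑ x, ∑ y, ν η * (p x y * u x (η x) * (f (moveConf η x y) - f η)) := by
    intro η
    rw [Finset.mul_sum]
    exact Finset.sum_congr rfl fun x _ => Finset.mul_sum _ _ _
  have hGsum : Summable (fun η : Λ → ℕ =>
      ν η * ∑ x, ∑ y, p x y * u x (η x) * (f (moveConf η x y) - f η)) := by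
    refine (summable_sum (s := Finset.univ) fun x _ =>
      summable_sum (s := Finset.univ) fun y _ =>
      (hpair x y).1).congr (fun η => (heq η).symm)
  refine ⟨summable_abs_iff.mpr hGsum, ?_⟩
  rw [tsum_congr heq]
  rw [Summable.tsum_finsetSum (fun x _ => summable_sum (s := Finset.univ) fun y _ => (hpair x y).1)]
  have hrow : ∀ x : Λ,
      ∑' η, ∑ y, ν η * (p x y * u x (η x) * (f (moveConf η x y) - f η)) =
      ∑ y, p x y * lam x * φ *
        ((∑' ζ, ν ζ * f (zrpAddOne y ζ)) - (∑' ζ, ν ζ * f (zrpAddOne x ζ))) := by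
    intro x
    rw [Summable.tsum_finsetSum (fun y _ => (hpair x y).1)]
    exact Finset.sum_congr rfl fun y _ => (hpair x y).2
  rw [Finset.sum_congr rfl fun x _ => hrow x]
  have hh : ∀ y : Λ, ∑ x, lam x * p x y = ∑ x, lam y * p y x := by
    intro y
    have h := hharm y
    rwa [Finset.sum_sub_distrib, sub_eq_zero] at h
  exact zrp_harm_cancel p lam (fun y => ∑' ζ, ν ζ * f (zrpAddOne y ζ)) φ hh
end

section
/- For all bounded functions f,g : ℕ^Λ → ℝ, all the relevant series converge absolutely and ν_φ^Λ(f·Lg) = ν_φ^Λ(g·Lf); in particular (taking g≡1) ν_φ^Λ(Lf) = 0, so ν_φ^Λ is a reversible stationary measure for the process. -/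
open Filter Topology

/-- Stationary weights: `w 0 = 1`, `w n = ∏_{k=1}^n v(k−1)/u(k)`. -/
noncomputable def mpWeight (u v : ℕ → ℝ) (n : ℕ) : ℝ :=
  ∏ k ∈ Finset.Icc 1 n, v (k - 1) / u k

/-- The generator `(Lf)(η) = ∑_{x,y} p(x,y)·u_x(η_x)·v_y(η_y)·(f(η^{xy}) − f(η))`. -/
noncomputable def genApply {Λ : Type*} [Fintype Λ] [DecidableEq Λ]
    (p : Λ → Λ → ℝ) (u v : Λ → ℕ → ℝ) (f : (Λ → ℕ) → ℝ) (η : Λ → ℕ) : ℝ :=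
  ∑ x, ∑ y, p x y * u x (η x) * v y (η y) * (f (moveConf η x y) - f η)


lemma summable_pi_prod {Λ : Type*} [Fintype Λ] [DecidableEq Λ] (F : Λ → ℕ → ℝ)
    (h0 : ∀ x n, 0 ≤ F x n) (hs : ∀ x, Summable (F x)) :
    Summable (fun η : Λ → ℕ => ∏ x, F x (η x)) := by
  apply summable_of_sum_le (c := ∏ x, ∑' n, F x n)
  · intro η
    exact Finset.prod_nonneg fun x _ => h0 x (η x)
  · intro s
    set N := (s.sup fun η => Finset.univ.sup η) + 1 with hN
    have hsub : s ⊆ Fintype.piFinset (fun _ : Λ => Finset.range N) := by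
      intro η hη
      simp only [Fintype.mem_piFinset, Finset.mem_range]
      intro x
      have h1 : η x ≤ Finset.univ.sup η := Finset.le_sup (Finset.mem_univ x)
      have h2 : Finset.univ.sup η ≤ s.sup fun η => Finset.univ.sup η :=
        Finset.le_sup hη
      omega
    calc ∑ η ∈ s, ∏ x, F x (η x)
        ≤ ∑ η ∈ Fintype.piFinset (fun _ : Λ => Finset.range N), ∏ x, F x (η x) :=
          Finset.sum_le_sum_of_subset_of_nonneg hsub
            (fun η _ _ => Finset.prod_nonneg fun x _ => h0 x (η x))
      _ = ∏ x, ∑ n ∈ Finset.range N, F x n := (Finset.prod_univ_sum _ _).symm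
      _ ≤ ∏ x, ∑' n, F x n := by
          apply Finset.prod_le_prod
          · intro x _; exact Finset.sum_nonneg fun n _ => h0 x n
          · intro x _; exact Summable.sum_le_tsum _ (fun n _ => h0 x n) (hs x)

lemma moveConf_self {Λ : Type*} [DecidableEq Λ] (η : Λ → ℕ) (y : Λ) (h : 1 ≤ η y) :
    moveConf η y y = η := by
  funext z; simp only [moveConf]; split_ifs with h1 <;> [subst h1; skip] <;> omega

lemma moveConf_left {Λ : Type*} [DecidableEq Λ] (η : Λ → ℕ) {x y : Λ} (h : x ≠ y) :
    moveConf η x y x = η x - 1 := by simp [moveConf, h]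

lemma moveConf_right {Λ : Type*} [DecidableEq Λ] (η : Λ → ℕ) {x y : Λ} (h : x ≠ y) :
    moveConf η x y y = η y + 1 := by simp [moveConf, h.symm]

lemma moveConf_other {Λ : Type*} [DecidableEq Λ] (η : Λ → ℕ) {x y z : Λ} (h1 : z ≠ x) (h2 : z ≠ y) :
    moveConf η x y z = η z := by simp [moveConf, h1, h2]

lemma moveConf_moveConf {Λ : Type*} [DecidableEq Λ] (η : Λ → ℕ) {x y : Λ} (hxy : x ≠ y)
    (h : 1 ≤ η x) : moveConf (moveConf η x y) y x = η := by
  funext z; simp only [moveConf]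
  by_cases h1 : z = x <;> by_cases h2 : z = y <;> simp [h1, h2, hxy, Ne.symm hxy] <;> omega
lemma mpWeight_zero (u v : ℕ → ℝ) : mpWeight u v 0 = 1 := by simp [mpWeight]

lemma mpWeight_pos (u v : ℕ → ℝ) (hu : ∀ n, 1 ≤ n → 0 < u n) (hv : ∀ n, 0 < v n) (n : ℕ) :
    0 < mpWeight u v n := by
  apply Finset.prod_pos
  intro k hk
  rw [Finset.mem_Icc] at hk
  exact div_pos (hv _) (hu _ hk.1)

lemma mpWeight_succ (u v : ℕ → ℝ) (n : ℕ) (hu : u (n + 1) ≠ 0) :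
    mpWeight u v (n + 1) * u (n + 1) = mpWeight u v n * v n := by
  unfold mpWeight
  rw [Finset.prod_Icc_succ_top (by omega)]
  simp only [Nat.add_sub_cancel]
  rw [mul_assoc, div_mul_cancel₀ _ hu]
lemma prod_split {Λ : Type*} [Fintype Λ] [DecidableEq Λ] (f : Λ → ℝ) {x y : Λ} (hxy : x ≠ y) :
    ∏ z, f z = (∏ z ∈ (Finset.univ \ {x}) \ {y}, f z) * (f x * f y) := by
  rw [Finset.prod_eq_prod_diff_singleton_mul (Finset.mem_univ x) f,
    Finset.prod_eq_prod_diff_singleton_mul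
      (show y ∈ Finset.univ \ {x} by simp [Ne.symm hxy]) f]
  ring

lemma core_reversible {Λ : Type*} [Fintype Λ] [DecidableEq Λ]
    (p : Λ → Λ → ℝ) (hp : ∀ x y, 0 ≤ p x y) (hpdiag : ∀ x, p x x = 0)
    (u v : Λ → ℕ → ℝ) (hupos : ∀ x n, 0 ≤ u x n) (hu0 : ∀ x, u x 0 = 0)
    (hvpos : ∀ x n, 0 < v x n)
    (F : Λ → ℕ → ℝ) (hF0 : ∀ x n, 0 ≤ F x n)
    (hFs : ∀ x, Summable (F x))
    (hFu : ∀ x, Summable (fun n => F x n * u x n))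
    (hFv : ∀ x, Summable (fun n => F x n * v x n))
    (hkey : ∀ x y : Λ, x ≠ y → ∀ η : Λ → ℕ, 1 ≤ η y →
      (∏ z, F z (η z)) * (p y x * u y (η y) * v x (η x)) =
      (∏ z, F z (moveConf η y x z)) * (p x y * u x (moveConf η y x x) * v y (moveConf η y x y)))
    (f g : (Λ → ℕ) → ℝ) (Mf Mg : ℝ) (hMf0 : 0 ≤ Mf) (hMg0 : 0 ≤ Mg)
    (hMf : ∀ η, |f η| ≤ Mf) (hMg : ∀ η, |g η| ≤ Mg) :
    Summable (fun η : Λ → ℕ => |(∏ z, F z (η z)) * (f η * genApply p u v g η)|) ∧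
    (∑' η : Λ → ℕ, (∏ z, F z (η z)) * (f η * genApply p u v g η)) =
      (∑' η : Λ → ℕ, (∏ z, F z (η z)) * (g η * genApply p u v f η)) := by
  classical
  set P : (Λ → ℕ) → ℝ := fun η => ∏ z, F z (η z) with hPdef
  have hP0 : ∀ η, 0 ≤ P η := fun η => Finset.prod_nonneg fun z _ => hF0 z (η z)
  -- summability of P · (u x · v y ·) for x ≠ y
  have hsum_uv : ∀ (x y : Λ), x ≠ y →
      Summable (fun η : Λ → ℕ => P η * (u x (η x) * v y (η y))) := by
    intro x y hxy
    have h := summable_pi_prod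
      (fun z => if z = x then (fun n => F z n * u x n)
        else if z = y then (fun n => F z n * v y n) else F z)
      (by
        intro z n
        split_ifs with h1 h2
        · exact mul_nonneg (hF0 z n) (hupos x n)
        · exact mul_nonneg (hF0 z n) (le_of_lt (hvpos y n))
        · exact hF0 z n)
      (by
        intro z
        split_ifs with h1 h2
        · rw [h1]; exact hFu x
        · rw [h2]; exact hFv y
        · exact hFs z)
    apply h.congr
    intro η
    simp only [hPdef]
    rw [prod_split (f := fun z =>
        (if z = x then (fun n => F z n * u x n)
          else if z = y then (fun n => F z n * v y n) else F z) (η z)) hxy]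
    rw [prod_split (f := fun z => F z (η z)) hxy]
    have he : ∀ z ∈ (Finset.univ \ {x}) \ {y},
        (if z = x then (fun n => F z n * u x n)
          else if z = y then (fun n => F z n * v y n) else F z) (η z) = F z (η z) := by
      intro z hz
      simp only [Finset.mem_sdiff, Finset.mem_singleton] at hz
      rw [if_neg hz.1.2, if_neg hz.2]
    rw [Finset.prod_congr rfl he]
    simp only [if_pos rfl, if_neg hxy, if_neg (Ne.symm hxy), if_true]
    ring
  -- abs summability of the basic summand
  have habs : ∀ (x y : Λ) (k : (Λ → ℕ) → ℝ) (M : ℝ), (∀ η, |k η| ≤ M) →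
      Summable (fun η : Λ → ℕ => |P η * (p x y * u x (η x) * v y (η y) * k η)|) := by
    intro x y k M hk
    by_cases hxy : x = y
    · subst hxy
      have he : (fun η : Λ → ℕ => |P η * (p x x * u x (η x) * v x (η x) * k η)|)
          = fun _ => 0 := by
        funext η; rw [hpdiag x]; simp
      rw [he]; exact summable_zero
    · apply Summable.of_nonneg_of_le (fun η => abs_nonneg _) ?_
        ((hsum_uv x y hxy).mul_left (p x y * M))
      intro η
      have h2 : 0 ≤ p x y * u x (η x) * v y (η y) :=
        mul_nonneg (mul_nonneg (hp x y) (hupos x _)) (le_of_lt (hvpos y _))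
      calc |P η * (p x y * u x (η x) * v y (η y) * k η)|
          = (P η * (p x y * u x (η x) * v y (η y))) * |k η| := by
            rw [show P η * (p x y * u x (η x) * v y (η y) * k η)
                = (P η * (p x y * u x (η x) * v y (η y))) * k η by ring,
              abs_mul, abs_of_nonneg (mul_nonneg (hP0 η) h2)]
        _ ≤ (P η * (p x y * u x (η x) * v y (η y))) * M :=
            mul_le_mul_of_nonneg_left (hk η) (mul_nonneg (hP0 η) h2)
        _ = p x y * M * (P η * (u x (η x) * v y (η y))) := by ring
  have hsummand : ∀ (x y : Λ) (k : (Λ → ℕ) → ℝ) (M : ℝ), (∀ η, |k η| ≤ M) →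
      Summable (fun η : Λ → ℕ => P η * (p x y * u x (η x) * v y (η y) * k η)) :=
    fun x y k M hk => (habs x y k M hk).of_abs
  -- support helper
  have hsupp : ∀ (x y : Λ) (k : (Λ → ℕ) → ℝ) (η : Λ → ℕ),
      P η * (p x y * u x (η x) * v y (η y) * k η) ≠ 0 → 1 ≤ η x := by
    intro x y k η hne
    by_contra hc
    exact hne (by rw [show η x = 0 by omega, hu0 x]; ring)
  -- the change-of-variables identity
  have hBij : ∀ (x y : Λ) (k : (Λ → ℕ) → ℝ),
      (∑' η : Λ → ℕ, P η * (p x y * u x (η x) * v y (η y) * k η)) =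
      (∑' η : Λ → ℕ, P η * (p y x * u y (η y) * v x (η x) * k (moveConf η y x))) := by
    intro x y k
    by_cases hxy : x = y
    · subst hxy
      apply tsum_congr; intro η
      by_cases h : η x = 0
      · rw [h, hu0 x]; ring
      · rw [moveConf_self η x (by omega)]
    · symm
      refine tsum_eq_tsum_of_ne_zero_bij (fun η => moveConf η.1 x y) ?_ ?_ ?_
      · rintro ⟨a, ha⟩ ⟨b, hb⟩ hab
        have h1a : 1 ≤ a x := hsupp x y _ a (Function.mem_support.mp ha)
        have h1b : 1 ≤ b x := hsupp x y _ b (Function.mem_support.mp hb)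
        simp only at hab
        exact Subtype.ext (by
          calc a = moveConf (moveConf a x y) y x := (moveConf_moveConf a hxy h1a).symm
            _ = moveConf (moveConf b x y) y x := by rw [hab]
            _ = b := moveConf_moveConf b hxy h1b)
      · intro ξ hξ
        have hy1 : 1 ≤ ξ y :=
          hsupp y x (fun η => k (moveConf η y x)) ξ (Function.mem_support.mp hξ)
        have hrec : moveConf (moveConf ξ y x) x y = ξ := moveConf_moveConf ξ (Ne.symm hxy) hy1
        refine ⟨⟨moveConf ξ y x, ?_⟩, hrec⟩
        have key := hkey x y hxy ξ hy1
        intro hzero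
        apply Function.mem_support.mp hξ
        show P ξ * (p y x * u y (ξ y) * v x (ξ x) * k (moveConf ξ y x)) = 0
        have he : P ξ * (p y x * u y (ξ y) * v x (ξ x) * k (moveConf ξ y x))
            = P (moveConf ξ y x) * (p x y * u x (moveConf ξ y x x) *
                v y (moveConf ξ y x y) * k (moveConf ξ y x)) := by
          linear_combination (k (moveConf ξ y x)) * key
        rw [he]
        exact hzero
      · rintro ⟨a, ha⟩
        have h1a : 1 ≤ a x := hsupp x y _ a (Function.mem_support.mp ha)
        have hζy : 1 ≤ (moveConf a x y) y := by rw [moveConf_right a hxy]; omega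
        have key := hkey x y hxy (moveConf a x y) hζy
        rw [moveConf_moveConf a hxy h1a] at key
        show P (moveConf a x y) * (p y x * u y ((moveConf a x y) y) * v x ((moveConf a x y) x) *
            k (moveConf (moveConf a x y) y x)) = P a * (p x y * u x (a x) * v y (a y) * k a)
        rw [moveConf_moveConf a hxy h1a]
        linear_combination (k a) * key
  -- expansion of the generator sum
  have hexp : ∀ (a b : (Λ → ℕ) → ℝ) (Ma Mb : ℝ), 0 ≤ Ma →
      (∀ η, |a η| ≤ Ma) → (∀ η, |b η| ≤ Mb) →
      (∑' η : Λ → ℕ, P η * (a η * genApply p u v b η)) =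
      ∑ x : Λ, ∑ y : Λ,
        ((∑' η : Λ → ℕ, P η * (p x y * u x (η x) * v y (η y) * (a η * b (moveConf η x y)))) -
         (∑' η : Λ → ℕ, P η * (p x y * u x (η x) * v y (η y) * (a η * b η)))) := by
    intro a b Ma Mb hMa0 hMa hMb
    have hb1 : ∀ x y (η : Λ → ℕ), |a η * b (moveConf η x y)| ≤ Ma * Mb := fun x y η => by
      rw [abs_mul]; exact mul_le_mul (hMa η) (hMb _) (abs_nonneg _) hMa0
    have hb2 : ∀ η : Λ → ℕ, |a η * b η| ≤ Ma * Mb := fun η => by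
      rw [abs_mul]; exact mul_le_mul (hMa η) (hMb _) (abs_nonneg _) hMa0
    have hs1 : ∀ x y : Λ, Summable (fun η : Λ → ℕ =>
        P η * (p x y * u x (η x) * v y (η y) * (a η * b (moveConf η x y)))) :=
      fun x y => hsummand x y _ (Ma * Mb) (hb1 x y)
    have hs2 : ∀ x y : Λ, Summable (fun η : Λ → ℕ =>
        P η * (p x y * u x (η x) * v y (η y) * (a η * b η))) :=
      fun x y => hsummand x y _ (Ma * Mb) hb2
    calc ∑' η : Λ → ℕ, P η * (a η * genApply p u v b η)
        = ∑' η : Λ → ℕ, ∑ x : Λ, ∑ y : Λ,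
            (P η * (p x y * u x (η x) * v y (η y) * (a η * b (moveConf η x y))) -
             P η * (p x y * u x (η x) * v y (η y) * (a η * b η))) := by
          apply tsum_congr; intro η
          simp only [genApply, Finset.mul_sum]
          refine Finset.sum_congr rfl fun x _ => Finset.sum_congr rfl fun y _ => by ring
      _ = ∑ x : Λ, ∑' η : Λ → ℕ, ∑ y : Λ,
            (P η * (p x y * u x (η x) * v y (η y) * (a η * b (moveConf η x y))) -
             P η * (p x y * u x (η x) * v y (η y) * (a η * b η))) :=
          Summable.tsum_finsetSum (fun x _ => summable_sum (fun y _ => (hs1 x y).sub (hs2 x y)))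
      _ = ∑ x : Λ, ∑ y : Λ, ∑' η : Λ → ℕ,
            (P η * (p x y * u x (η x) * v y (η y) * (a η * b (moveConf η x y))) -
             P η * (p x y * u x (η x) * v y (η y) * (a η * b η))) :=
          Finset.sum_congr rfl fun x _ =>
            Summable.tsum_finsetSum (fun y _ => (hs1 x y).sub (hs2 x y))
      _ = _ :=
          Finset.sum_congr rfl fun x _ => Finset.sum_congr rfl fun y _ =>
            Summable.tsum_sub (hs1 x y) (hs2 x y)
  constructor
  · -- summability
    apply Summable.of_nonneg_of_le (fun η => abs_nonneg _) ?_
      (summable_sum (s := Finset.univ) (fun x _ => summable_sum (s := Finset.univ) (fun y _ =>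
        ((habs x y (fun η => f η * g (moveConf η x y)) (Mf * Mg) (fun η => by
          rw [abs_mul]; exact mul_le_mul (hMf η) (hMg _) (abs_nonneg _) hMf0)).add
         (habs x y (fun η => f η * g η) (Mf * Mg) (fun η => by
          rw [abs_mul]; exact mul_le_mul (hMf η) (hMg _) (abs_nonneg _) hMf0))))))
    intro η
    have hrw : P η * (f η * genApply p u v g η) = ∑ x : Λ, ∑ y : Λ,
        (P η * (p x y * u x (η x) * v y (η y) * (f η * g (moveConf η x y))) -
         P η * (p x y * u x (η x) * v y (η y) * (f η * g η))) := by
      simp only [genApply, Finset.mul_sum]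
      refine Finset.sum_congr rfl fun x _ => Finset.sum_congr rfl fun y _ => by ring
    rw [hrw]
    calc |∑ x : Λ, ∑ y : Λ,
        (P η * (p x y * u x (η x) * v y (η y) * (f η * g (moveConf η x y))) -
         P η * (p x y * u x (η x) * v y (η y) * (f η * g η)))|
        ≤ ∑ x : Λ, |∑ y : Λ,
            (P η * (p x y * u x (η x) * v y (η y) * (f η * g (moveConf η x y))) -
             P η * (p x y * u x (η x) * v y (η y) * (f η * g η)))| :=
          Finset.abs_sum_le_sum_abs _ _
      _ ≤ ∑ x : Λ, ∑ y : Λ,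
            |P η * (p x y * u x (η x) * v y (η y) * (f η * g (moveConf η x y))) -
             P η * (p x y * u x (η x) * v y (η y) * (f η * g η))| :=
          Finset.sum_le_sum fun x _ => Finset.abs_sum_le_sum_abs _ _
      _ ≤ ∑ x : Λ, ∑ y : Λ,
            (|P η * (p x y * u x (η x) * v y (η y) * (f η * g (moveConf η x y)))| +
             |P η * (p x y * u x (η x) * v y (η y) * (f η * g η))|) :=
          Finset.sum_le_sum fun x _ => Finset.sum_le_sum fun y _ => abs_sub _ _
  · -- the symmetry identity
    rw [hexp f g Mf Mg hMf0 hMf hMg, hexp g f Mg Mf hMg0 hMg hMf]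
    have hD : ∀ x y : Λ,
        (∑' η : Λ → ℕ, P η * (p x y * u x (η x) * v y (η y) * (f η * g (moveConf η x y)))) =
        (∑' η : Λ → ℕ, P η * (p y x * u y (η y) * v x (η x) * (f (moveConf η y x) * g η))) := by
      intro x y
      by_cases hxy : x = y
      · subst hxy
        apply tsum_congr; intro η; rw [hpdiag x]; ring
      · rw [hBij x y (fun η => f η * g (moveConf η x y))]
        apply tsum_congr; intro η
        by_cases h0 : η y = 0
        · rw [h0, hu0 y]; ring
        · rw [moveConf_moveConf η (Ne.symm hxy) (by omega)]
    have e1 : ∑ x : Λ, ∑ y : Λ,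
        ((∑' η : Λ → ℕ, P η * (p x y * u x (η x) * v y (η y) * (f η * g (moveConf η x y)))) -
         (∑' η : Λ → ℕ, P η * (p x y * u x (η x) * v y (η y) * (f η * g η)))) =
        (∑ x : Λ, ∑ y : Λ,
          (∑' η : Λ → ℕ, P η * (p y x * u y (η y) * v x (η x) * (f (moveConf η y x) * g η)))) -
        (∑ x : Λ, ∑ y : Λ,
          (∑' η : Λ → ℕ, P η * (p x y * u x (η x) * v y (η y) * (f η * g η)))) := by
      rw [← Finset.sum_sub_distrib]
      refine Finset.sum_congr rfl fun x _ => ?_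
      rw [← Finset.sum_sub_distrib]
      exact Finset.sum_congr rfl fun y _ => by rw [hD x y]
    rw [e1]
    have e2 : ∑ x : Λ, ∑ y : Λ,
        ((∑' η : Λ → ℕ, P η * (p x y * u x (η x) * v y (η y) * (g η * f (moveConf η x y)))) -
         (∑' η : Λ → ℕ, P η * (p x y * u x (η x) * v y (η y) * (g η * f η)))) =
        (∑ x : Λ, ∑ y : Λ,
          (∑' η : Λ → ℕ, P η * (p x y * u x (η x) * v y (η y) * (f (moveConf η x y) * g η)))) -
        (∑ x : Λ, ∑ y : Λ,
          (∑' η : Λ → ℕ, P η * (p x y * u x (η x) * v y (η y) * (f η * g η)))) := by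
      rw [← Finset.sum_sub_distrib]
      refine Finset.sum_congr rfl fun x _ => ?_
      rw [← Finset.sum_sub_distrib]
      refine Finset.sum_congr rfl fun y _ => ?_
      congr 1
      · exact tsum_congr fun η => by ring
      · exact tsum_congr fun η => by ring
    rw [e2]
    congr 1
    rw [Finset.sum_comm]

lemma prod_move {Λ : Type*} [Fintype Λ] [DecidableEq Λ] (F : Λ → ℕ → ℝ) (η : Λ → ℕ)
    {x y : Λ} (hxy : x ≠ y) :
    (∏ z, F z (moveConf η y x z)) * (F x (η x) * F y (η y)) =
    (∏ z, F z (η z)) * (F x (η x + 1) * F y (η y - 1)) := by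
  rw [prod_split (f := fun z => F z (moveConf η y x z)) hxy,
    prod_split (f := fun z => F z (η z)) hxy]
  have he : ∀ z ∈ (Finset.univ \ {x}) \ {y}, F z (moveConf η y x z) = F z (η z) := by
    intro z hz
    simp only [Finset.mem_sdiff, Finset.mem_singleton] at hz
    rw [moveConf_other η hz.2 hz.1.2]
  rw [Finset.prod_congr rfl he, moveConf_right η (Ne.symm hxy), moveConf_left η (Ne.symm hxy)]
  ring

/-- Under detailed balance `lam x p(x,y) = lam y p(y,x)` all relevant series converge
absolutely, `ν_φ^Λ(f·Lg) = ν_φ^Λ(g·Lf)` for bounded `f, g`, and in particular (taking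
`g ≡ 1`) `ν_φ^Λ(Lf) = 0`: the product measure is a reversible stationary measure. -/
theorem detailed_balance_product_measure_reversible
    {Λ : Type*} [Fintype Λ] [DecidableEq Λ] [Nonempty Λ]
    (p : Λ → Λ → ℝ) (hp : ∀ x y, 0 ≤ p x y) (hpdiag : ∀ x, p x x = 0)
    (lam : Λ → ℝ) (hlam : ∀ x, 0 < lam x)
    (hdb : ∀ x y : Λ, lam x * p x y = lam y * p y x)
    (u : Λ → ℕ → ℝ) (hupos : ∀ x n, 0 ≤ u x n)
    (huzero : ∀ x n, u x n = 0 ↔ n = 0)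
    (v : Λ → ℕ → ℝ) (hvpos : ∀ x n, 0 < v x n) (hv0 : ∀ x, v x 0 = 1)
    (φ : ℝ) (hφ : 0 < φ)
    (hz : ∀ x : Λ, Summable (fun n => mpWeight (u x) (v x) n * (lam x * φ) ^ n))
    (hzv : ∀ x : Λ, Summable (fun n => v x n * mpWeight (u x) (v x) n * (lam x * φ) ^ n))
    (ν : (Λ → ℕ) → ℝ)
    (hν : ∀ η, ν η = ∏ x, mpWeight (u x) (v x) (η x) * (lam x * φ) ^ (η x) /
        (∑' n, mpWeight (u x) (v x) n * (lam x * φ) ^ n))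
    (f g : (Λ → ℕ) → ℝ) (hf : ∃ M, ∀ η, |f η| ≤ M) (hg : ∃ M, ∀ η, |g η| ≤ M) :
    Summable (fun η : Λ → ℕ => |ν η * (f η * genApply p u v g η)|) ∧
    Summable (fun η : Λ → ℕ => |ν η * (g η * genApply p u v f η)|) ∧
    (∑' η : Λ → ℕ, ν η * (f η * genApply p u v g η)) =
      (∑' η : Λ → ℕ, ν η * (g η * genApply p u v f η)) ∧
    (∑' η : Λ → ℕ, ν η * genApply p u v f η) = 0 := by
  classical
  obtain ⟨Mf, hMf⟩ := hf
  obtain ⟨Mg, hMg⟩ := hg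
  have hMf0 : 0 ≤ Mf := le_trans (abs_nonneg _) (hMf fun _ => 0)
  have hMg0 : 0 ≤ Mg := le_trans (abs_nonneg _) (hMg fun _ => 0)
  have hupos1 : ∀ (x : Λ) (n : ℕ), 1 ≤ n → 0 < u x n := by
    intro x n hn
    rcases lt_or_eq_of_le (hupos x n) with h | h
    · exact h
    · exact absurd ((huzero x n).mp h.symm) (by omega)
  have htpos : ∀ x : Λ, 0 < lam x * φ := fun x => mul_pos (hlam x) hφ
  have hWpos : ∀ (x : Λ) (n : ℕ), 0 < mpWeight (u x) (v x) n :=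
    fun x n => mpWeight_pos _ _ (fun m hm => hupos1 x m hm) (hvpos x) n
  have hterm0 : ∀ (x : Λ) (n : ℕ), 0 ≤ mpWeight (u x) (v x) n * (lam x * φ) ^ n :=
    fun x n => mul_nonneg (le_of_lt (hWpos x n)) (pow_nonneg (le_of_lt (htpos x)) n)
  have hZpos : ∀ x : Λ, 0 < ∑' n, mpWeight (u x) (v x) n * (lam x * φ) ^ n :=
    fun x => Summable.tsum_pos (hz x) (hterm0 x) 0 (by rw [mpWeight_zero]; simp)
  set F : Λ → ℕ → ℝ := fun x n => mpWeight (u x) (v x) n * (lam x * φ) ^ n /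
      (∑' m : ℕ, mpWeight (u x) (v x) m * (lam x * φ) ^ m) with hFdef
  have hν' : ∀ η, ν η = ∏ z, F z (η z) := fun η =>
    (hν η).trans (Finset.prod_congr rfl fun z _ => rfl)
  have hF0 : ∀ (x : Λ) (n : ℕ), 0 ≤ F x n :=
    fun x n => div_nonneg (hterm0 x n) (le_of_lt (hZpos x))
  have hFpos : ∀ (x : Λ) (n : ℕ), 0 < F x n :=
    fun x n => div_pos (mul_pos (hWpos x n) (pow_pos (htpos x) n)) (hZpos x)
  have hFs : ∀ x, Summable (F x) := fun x => (hz x).div_const _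
  have hFv : ∀ x : Λ, Summable (fun n => F x n * v x n) := by
    intro x
    apply ((hzv x).div_const (∑' m : ℕ, mpWeight (u x) (v x) m * (lam x * φ) ^ m)).congr
    intro n
    simp only [hFdef]
    ring
  have hFu : ∀ x : Λ, Summable (fun n => F x n * u x n) := by
    intro x
    apply (summable_nat_add_iff 1).mp
    apply ((hzv x).mul_right ((lam x * φ) /
      (∑' m : ℕ, mpWeight (u x) (v x) m * (lam x * φ) ^ m))).congr
    intro n
    have hrec := mpWeight_succ (u x) (v x) n (ne_of_gt (hupos1 x (n + 1) (by omega)))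
    have hZx := ne_of_gt (hZpos x)
    simp only [hFdef]
    rw [pow_succ]
    field_simp
    linear_combination (-(lam x * lam x ^ n * φ ^ n)) * hrec
  have hkey : ∀ x y : Λ, x ≠ y → ∀ η : Λ → ℕ, 1 ≤ η y →
      (∏ z, F z (η z)) * (p y x * u y (η y) * v x (η x)) =
      (∏ z, F z (moveConf η y x z)) * (p x y * u x (moveConf η y x x) * v y (moveConf η y x y)) := by
    intro x y hxy η hy
    rw [moveConf_right η (Ne.symm hxy), moveConf_left η (Ne.symm hxy)]
    obtain ⟨m, hm⟩ : ∃ m, η y = m + 1 := ⟨η y - 1, by omega⟩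
    have pm := prod_move F η hxy
    rw [hm] at pm ⊢
    simp only [Nat.add_sub_cancel] at pm ⊢
    have S : (F x (η x) * F y (m + 1)) * (p y x * u y (m + 1) * v x (η x)) =
        (F x (η x + 1) * F y m) * (p x y * u x (η x + 1) * v y m) := by
      have h1 := mpWeight_succ (u y) (v y) m (ne_of_gt (hupos1 y (m + 1) (by omega)))
      have h2 := mpWeight_succ (u x) (v x) (η x) (ne_of_gt (hupos1 x (η x + 1) (by omega)))
      have h3 : p y x * (lam y * φ) = p x y * (lam x * φ) := by
        linear_combination φ * hdb y x
      have hZx := ne_of_gt (hZpos x)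
      have hZy := ne_of_gt (hZpos y)
      simp only [hFdef]
      rw [pow_succ, pow_succ]
      field_simp
      congr 1
      apply mul_right_cancel₀ (ne_of_gt hφ)
      linear_combination
        (v x (η x) * mpWeight (u x) (v x) (η x) * (lam x * φ) ^ (η x) *
          (lam y * φ) ^ m * (lam y * φ) * p y x) * h1 +
        (-(v y m * mpWeight (u y) (v y) m * (lam x * φ) ^ (η x) *
          (lam y * φ) ^ m * (lam x * φ) * p x y)) * h2 +
        (mpWeight (u x) (v x) (η x) * v x (η x) * mpWeight (u y) (v y) m * v y m *
          (lam x * φ) ^ (η x) * (lam y * φ) ^ m) * h3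
    apply mul_left_cancel₀ (ne_of_gt (mul_pos (hFpos x (η x)) (hFpos y (m + 1))))
    linear_combination (∏ z, F z (η z)) * S - (p x y * u x (η x + 1) * v y m) * pm
  have hu0 : ∀ x : Λ, u x 0 = 0 := fun x => (huzero x 0).mpr rfl
  obtain ⟨hsum_fg, heq_fg⟩ := core_reversible p hp hpdiag u v hupos hu0 hvpos F hF0 hFs hFu hFv
    hkey f g Mf Mg hMf0 hMg0 hMf hMg
  obtain ⟨hsum_gf, -⟩ := core_reversible p hp hpdiag u v hupos hu0 hvpos F hF0 hFs hFu hFv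
    hkey g f Mg Mf hMg0 hMf0 hMg hMf
  obtain ⟨-, heq_one⟩ := core_reversible p hp hpdiag u v hupos hu0 hvpos F hF0 hFs hFu hFv
    hkey f (fun _ => (1 : ℝ)) Mf 1 hMf0 zero_le_one hMf (fun η => by simp)
  refine ⟨?_, ?_, ?_, ?_⟩
  · simpa only [hν'] using hsum_fg
  · simpa only [hν'] using hsum_gf
  · simp only [hν']; exact heq_fg
  · have hgen1 : ∀ η : Λ → ℕ, genApply p u v (fun _ => (1 : ℝ)) η = 0 := by
      intro η; simp [genApply]
    calc ∑' η : Λ → ℕ, ν η * genApply p u v f η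
        = ∑' η : Λ → ℕ, (∏ z, F z (η z)) * ((fun _ => (1 : ℝ)) η * genApply p u v f η) :=
          tsum_congr fun η => by rw [hν' η]; ring
      _ = ∑' η : Λ → ℕ, (∏ z, F z (η z)) * (f η * genApply p u v (fun _ => (1 : ℝ)) η) :=
          heq_one.symm
      _ = 0 := by simp [hgen1]
end

section
/- (i) If γ > 1, then n^γ·w(n) converges as n → ∞ to a limit in (0,∞) (power-law decay of the stationary weights). (ii) If γ > 2, then z(1) < ∞ and ∑_n n·w(n) < ∞, so the explosive condensation model condenses with finite critical density ρ_c = (∑_n n·w(n))/z(1), while the grand-canonical current diverges at criticality: j_gc(φ) = φ·(∑_{n≥0} v(n)·w(n)·φ^n / z(φ))² → ∞ as φ ↗ 1. -/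
open Filter Topology

/-- Stationary weights of the explosive condensation model:
`w(n) = ∏_{k=1}^n (k−1+d)^γ / ((k+d)^γ − d^γ)`. -/
noncomputable def ecmW (d γ : ℝ) (n : ℕ) : ℝ :=
  ∏ k ∈ Finset.Icc 1 n, ((k : ℝ) - 1 + d) ^ γ / (((k : ℝ) + d) ^ γ - d ^ γ)

private lemma ecm_superadd {a b p : ℝ} (ha : 0 ≤ a) (hb : 0 ≤ b) (hp : 1 ≤ p) :
    a^p + b^p ≤ (a+b)^p := by
  have h := NNReal.add_rpow_le_rpow_add a.toNNReal b.toNNReal hp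
  rw [← Real.toNNReal_add ha hb] at h
  have := NNReal.coe_le_coe.mpr h
  push_cast [NNReal.coe_rpow, Real.coe_toNNReal _ ha, Real.coe_toNNReal _ hb,
    Real.coe_toNNReal _ (add_nonneg ha hb)] at this
  linarith

private lemma ecmW_zero (d γ : ℝ) : ecmW d γ 0 = 1 := by simp [ecmW]

private lemma ecmW_succ (d γ : ℝ) (n : ℕ) :
    ecmW d γ (n+1) = ecmW d γ n * (((n:ℝ) + d)^γ / (((n:ℝ)+1+d)^γ - d^γ)) := by
  unfold ecmW
  rw [Finset.prod_Icc_succ_top (Nat.le_add_left 1 n)]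
  congr 2 <;> push_cast <;> ring

private lemma ecm_denom_pos {d γ : ℝ} (hd : 0 < d) (hγ : 0 < γ) {x : ℝ} (hx : 0 < x) :
    0 < (x + d)^γ - d^γ := by
  have : d^γ < (x+d)^γ := Real.rpow_lt_rpow hd.le (by linarith) hγ
  linarith

private lemma ecmW_pos {d γ : ℝ} (hd : 0 < d) (hγ : 0 < γ) (n : ℕ) : 0 < ecmW d γ n := by
  induction n with
  | zero => simp [ecmW_zero]
  | succ n ih =>
    rw [ecmW_succ]
    have h1 : (0:ℝ) < (n:ℝ) + d := by positivity
    have h2 : 0 < ((n:ℝ)+1+d)^γ - d^γ := ecm_denom_pos hd hγ (by positivity)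
    positivity

/-- Part (i): power-law decay of the stationary weights. -/
private lemma ecm_part_i {d γ : ℝ} (hd : 0 < d) (hγ : 1 < γ) :
    ∃ c : ℝ, 0 < c ∧
      Tendsto (fun n : ℕ => (n : ℝ) ^ γ * ecmW d γ n) atTop (𝓝 c) := by
  have hγ0 : 0 < γ := by linarith
  set F : ℕ → ℝ := fun n => (n:ℝ)^γ * ecmW d γ n with hFdef
  have hFpos : ∀ n : ℕ, 0 < F (n+1) := by
    intro n
    have h1 : (0:ℝ) < ((n+1:ℕ):ℝ) := by push_cast; positivity
    exact mul_pos (Real.rpow_pos_of_pos h1 γ) (ecmW_pos hd hγ0 (n+1))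
  -- the per-step ratio
  have key : ∀ i : ℕ, F (i+2) = F (i+1) *
      ((((i:ℝ)+2) * (((i:ℝ)+2)+d-1) / ((((i:ℝ)+2)-1) * (((i:ℝ)+2)+d)))^γ *
        ((((i:ℝ)+2)+d)^γ / ((((i:ℝ)+2)+d)^γ - d^γ))) := by
    intro i
    set k : ℝ := (i:ℝ) + 2 with hk
    have hi : (0:ℝ) ≤ (i:ℝ) := Nat.cast_nonneg i
    have hk1 : (0:ℝ) < k - 1 := by rw [hk]; linarith
    have hk0 : (0:ℝ) < k := by linarith
    have hkd1 : (0:ℝ) < k + d - 1 := by linarith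
    have hkd : (0:ℝ) < k + d := by linarith
    have hD : 0 < (k+d)^γ - d^γ := ecm_denom_pos hd hγ0 hk0
    have hw : ecmW d γ (i+2) = ecmW d γ (i+1) * ((k-1+d)^γ / ((k+d)^γ - d^γ)) := by
      have := ecmW_succ d γ (i+1)
      have hc1 : ((i+1:ℕ):ℝ) = k - 1 := by push_cast [hk]; ring
      rw [show i+1+1 = i+2 from rfl] at this
      rw [this, hc1]
      congr 2
      ring
    have hcast2 : ((i+2:ℕ):ℝ) = k := by push_cast [hk]; ring
    have hcast1 : ((i+1:ℕ):ℝ) = k - 1 := by push_cast [hk]; ring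
    have hP : (k * (k+d-1) / ((k-1) * (k+d)))^γ
        = k^γ * (k+d-1)^γ / ((k-1)^γ * (k+d)^γ) := by
      rw [Real.div_rpow (by positivity) (by positivity),
        Real.mul_rpow hk0.le hkd1.le, Real.mul_rpow hk1.le hkd.le]
    show ((i+2:ℕ):ℝ)^γ * ecmW d γ (i+2) = ((i+1:ℕ):ℝ)^γ * ecmW d γ (i+1) * _
    rw [hcast2, hcast1, hw, hP]
    have e1 : (0:ℝ) < (k-1)^γ := Real.rpow_pos_of_pos hk1 γ
    have e2 : (0:ℝ) < (k+d)^γ := Real.rpow_pos_of_pos hkd γ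
    have e3 : k - 1 + d = k + d - 1 := by ring
    rw [e3]
    field_simp
  -- convergence via logs
  set g : ℕ → ℝ := fun i => Real.log (F (i+1)) with hgdef
  set l : ℕ → ℝ := fun i => Real.log (F (i+2)) - Real.log (F (i+1)) with hldef
  have hfacts : ∀ i : ℕ,
      0 ≤ l i ∧ l i ≤ γ*d*(((i:ℝ)+1)^(-2:ℝ)) + d^γ*(((i:ℝ)+1)^(-γ)) := by
    intro i
    set k : ℝ := (i:ℝ) + 2 with hk
    have hi : (0:ℝ) ≤ (i:ℝ) := Nat.cast_nonneg i
    have hk1 : (0:ℝ) < k - 1 := by rw [hk]; linarith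
    have hk0 : (0:ℝ) < k := by linarith
    have hkd1 : (0:ℝ) < k + d - 1 := by linarith
    have hkd : (0:ℝ) < k + d := by linarith
    have hD : 0 < (k+d)^γ - d^γ := ecm_denom_pos hd hγ0 hk0
    set P : ℝ := k * (k+d-1) / ((k-1) * (k+d)) with hPdef
    set Q : ℝ := (k+d)^γ / ((k+d)^γ - d^γ) with hQdef
    have hPpos : 0 < P := by positivity
    have hQpos : 0 < Q := by positivity
    have hP1 : 1 ≤ P := by
      rw [hPdef, le_div_iff₀ (by positivity)]
      nlinarith
    have hQ1 : 1 ≤ Q := by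
      rw [hQdef, le_div_iff₀ hD]
      have : (0:ℝ) < d^γ := Real.rpow_pos_of_pos hd γ
      linarith
    have hR : F (i+2) = F (i+1) * (P^γ * Q) := by
      rw [hPdef, hQdef, hk]; exact key i
    have hl : l i = γ * Real.log P + Real.log Q := by
      have hF1 := hFpos i
      have h1 : Real.log (F (i+2)) = Real.log (F (i+1)) +
          (γ * Real.log P + Real.log Q) := by
        rw [hR, Real.log_mul hF1.ne' (by positivity),
          Real.log_mul (by positivity) hQpos.ne', Real.log_rpow hPpos]
      simp only [hldef]
      rw [h1]; ring
    have hu : (0:ℝ) < (i:ℝ) + 1 := by positivity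
    constructor
    · rw [hl]
      have := Real.log_nonneg hP1
      have := Real.log_nonneg hQ1
      positivity
    · rw [hl]
      have hlogP : Real.log P ≤ d * (((i:ℝ)+1)^(-2:ℝ)) := by
        have h1 : Real.log P ≤ P - 1 := Real.log_le_sub_one_of_pos hPpos
        have h2 : P - 1 = d / ((k-1) * (k+d)) := by
          rw [hPdef]
          field_simp
          ring
        have h3 : ((i:ℝ)+1) * ((i:ℝ)+1) ≤ (k-1) * (k+d) := by nlinarith
        have h4 : ((i:ℝ)+1)^(-2:ℝ) = (((i:ℝ)+1) * ((i:ℝ)+1))⁻¹ := by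
          rw [Real.rpow_neg hu.le, show (2:ℝ) = ((2:ℕ):ℝ) by norm_num,
            Real.rpow_natCast]
          norm_num [sq]
        rw [h4]
        calc Real.log P ≤ d / ((k-1) * (k+d)) := by rw [← h2]; exact h1
          _ ≤ d / (((i:ℝ)+1) * ((i:ℝ)+1)) :=
            div_le_div_of_nonneg_left hd.le (by positivity) h3
          _ = d * (((i:ℝ)+1) * ((i:ℝ)+1))⁻¹ := by rw [div_eq_mul_inv]
      have hlogQ : Real.log Q ≤ d^γ * (((i:ℝ)+1)^(-γ)) := by
        have h1 : Real.log Q ≤ Q - 1 := Real.log_le_sub_one_of_pos hQpos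
        have h2 : Q - 1 = d^γ / ((k+d)^γ - d^γ) := by
          rw [hQdef]
          field_simp
          ring
        have h3 : ((i:ℝ)+1)^γ ≤ (k+d)^γ - d^γ := by
          have hs := ecm_superadd hk0.le hd.le hγ.le
          have hm : ((i:ℝ)+1)^γ ≤ k^γ :=
            Real.rpow_le_rpow hu.le (by rw [hk]; linarith) hγ0.le
          linarith
        have h4 : ((i:ℝ)+1)^(-γ) = (((i:ℝ)+1)^γ)⁻¹ := Real.rpow_neg hu.le γ
        rw [h4]
        calc Real.log Q ≤ d^γ / ((k+d)^γ - d^γ) := by rw [← h2]; exact h1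
          _ ≤ d^γ / (((i:ℝ)+1)^γ) := by
            apply div_le_div_of_nonneg_left (by positivity) (by positivity) h3
          _ = d^γ * (((i:ℝ)+1)^γ)⁻¹ := by rw [div_eq_mul_inv]
      have := mul_le_mul_of_nonneg_left hlogP hγ0.le
      nlinarith
  have hsum2 : Summable (fun i : ℕ => ((i:ℝ)+1)^(-2:ℝ)) := by
    have base : Summable (fun n : ℕ => (n:ℝ) ^ (-2:ℝ)) :=
      Real.summable_nat_rpow.mpr (by norm_num)
    have := (summable_nat_add_iff 1).mpr base
    simpa using this
  have hsumγ : Summable (fun i : ℕ => ((i:ℝ)+1)^(-γ)) := by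
    have base : Summable (fun n : ℕ => (n:ℝ) ^ (-γ)) :=
      Real.summable_nat_rpow.mpr (by linarith)
    have := (summable_nat_add_iff 1).mpr base
    simpa using this
  have hM : Summable (fun i : ℕ =>
      γ*d*(((i:ℝ)+1)^(-2:ℝ)) + d^γ*(((i:ℝ)+1)^(-γ))) :=
    (hsum2.mul_left _).add (hsumγ.mul_left _)
  have hl_sum : Summable l :=
    Summable.of_nonneg_of_le (fun i => (hfacts i).1) (fun i => (hfacts i).2) hM
  have hps : Tendsto (fun n => ∑ i ∈ Finset.range n, l i) atTop (𝓝 (∑' i, l i)) :=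
    hl_sum.hasSum.tendsto_sum_nat
  have htel : ∀ n, ∑ i ∈ Finset.range n, l i = g n - g 0 := by
    intro n
    have heq : ∀ i, l i = g (i+1) - g i := fun i => rfl
    calc ∑ i ∈ Finset.range n, l i = ∑ i ∈ Finset.range n, (g (i+1) - g i) :=
          Finset.sum_congr rfl (fun i _ => heq i)
      _ = g n - g 0 := Finset.sum_range_sub g n
  have hg : Tendsto g atTop (𝓝 ((∑' i, l i) + g 0)) := by
    have h1 : Tendsto (fun n => g n - g 0) atTop (𝓝 (∑' i, l i)) := by
      simpa [htel] using hps
    have := h1.add_const (g 0)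
    simpa using this
  refine ⟨Real.exp ((∑' i, l i) + g 0), Real.exp_pos _, ?_⟩
  apply (tendsto_add_atTop_iff_nat 1).mp
  have hFe : ∀ n : ℕ, F (n+1) = Real.exp (g n) := fun n =>
    (Real.exp_log (hFpos n)).symm
  have : Tendsto (fun n : ℕ => Real.exp (g n)) atTop
      (𝓝 (Real.exp ((∑' i, l i) + g 0))) :=
    (Real.continuous_exp.continuousAt.tendsto).comp hg
  exact this.congr (fun n => (hFe n).symm)

/-- (i) For `γ > 1` the stationary weights decay like a power law,
`n^γ·w(n) → c ∈ (0,∞)`; (ii) for `γ > 2` the explosive condensation model condenses,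
`z(1) < ∞` and `∑ n·w(n) < ∞` (so `ρ_c = (∑ n·w(n))/z(1) < ∞`), while the
grand-canonical current `j_gc(φ) = φ·(ν_φ^1(v))²` diverges as `φ ↗ 1`. -/
theorem ecm_condensation (d γ : ℝ) (hd : 0 < d) (hγ : 0 < γ) :
    (1 < γ → ∃ c : ℝ, 0 < c ∧
      Tendsto (fun n : ℕ => (n : ℝ) ^ γ * ecmW d γ n) atTop (𝓝 c)) ∧
    (2 < γ →
      Summable (ecmW d γ) ∧
      Summable (fun n : ℕ => (n : ℝ) * ecmW d γ n) ∧
      Tendsto (fun φ : ℝ => φ *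
          ((∑' n : ℕ, ((n : ℝ) + d) ^ γ * ecmW d γ n * φ ^ n) /
            (∑' n : ℕ, ecmW d γ n * φ ^ n)) ^ 2)
        (𝓝[<] (1 : ℝ)) atTop) := by
  constructor
  · exact fun h => ecm_part_i hd h
  intro hγ2
  have hγ1 : 1 < γ := by linarith
  obtain ⟨c, hc, hF⟩ := ecm_part_i hd hγ1
  set F : ℕ → ℝ := fun n => (n:ℝ)^γ * ecmW d γ n with hFdef
  have hw_pos : ∀ n, 0 < ecmW d γ n := ecmW_pos hd hγ
  have hw_nonneg : ∀ n, 0 ≤ ecmW d γ n := fun n => (hw_pos n).le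
  -- w is O(n^{-γ})
  have heq1 : (fun n : ℕ => ecmW d γ n) =ᶠ[atTop]
      (fun n : ℕ => F n * (n:ℝ)^(-γ)) := by
    filter_upwards [eventually_ge_atTop 1] with n hn
    have hn0 : (0:ℝ) < (n:ℝ) := by exact_mod_cast hn
    have h1 : (n:ℝ)^γ * (n:ℝ)^(-γ) = 1 := by
      rw [← Real.rpow_add hn0]; simp
    rw [hFdef]
    calc ecmW d γ n = ecmW d γ n * ((n:ℝ)^γ * (n:ℝ)^(-γ)) := by rw [h1]; ring
      _ = (n:ℝ)^γ * ecmW d γ n * (n:ℝ)^(-γ) := by ring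
  have hO : (fun n : ℕ => ecmW d γ n) =O[atTop] (fun n : ℕ => (n:ℝ)^(-γ)) := by
    have h1 : (fun n : ℕ => F n) =O[atTop] (fun _ : ℕ => (1:ℝ)) := hF.isBigO_one ℝ
    have h2 : (fun n : ℕ => F n * (n:ℝ)^(-γ)) =O[atTop]
        (fun n : ℕ => (1:ℝ) * (n:ℝ)^(-γ)) :=
      h1.mul (Asymptotics.isBigO_refl (fun n : ℕ => (n:ℝ)^(-γ)) atTop)
    simp only [one_mul] at h2
    exact h2.congr' heq1.symm EventuallyEq.rfl
  have hsum_w : Summable (ecmW d γ) :=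
    summable_of_isBigO_nat (Real.summable_nat_rpow.mpr (by linarith)) hO
  -- n·w is O(n^{1-γ})
  have heq2 : (fun n : ℕ => (n:ℝ) * ecmW d γ n) =ᶠ[atTop]
      (fun n : ℕ => F n * (n:ℝ)^(1-γ)) := by
    filter_upwards [eventually_ge_atTop 1] with n hn
    have hn0 : (0:ℝ) < (n:ℝ) := by exact_mod_cast hn
    have h1 : (n:ℝ)^γ * (n:ℝ)^(1-γ) = (n:ℝ) := by
      rw [← Real.rpow_add hn0]; simp
    rw [hFdef]
    calc (n:ℝ) * ecmW d γ n = ((n:ℝ)^γ * (n:ℝ)^(1-γ)) * ecmW d γ n := by rw [h1]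
      _ = (n:ℝ)^γ * ecmW d γ n * (n:ℝ)^(1-γ) := by ring
  have hO2 : (fun n : ℕ => (n:ℝ) * ecmW d γ n) =O[atTop]
      (fun n : ℕ => (n:ℝ)^(1-γ)) := by
    have h1 : (fun n : ℕ => F n) =O[atTop] (fun _ : ℕ => (1:ℝ)) := hF.isBigO_one ℝ
    have h2 : (fun n : ℕ => F n * (n:ℝ)^(1-γ)) =O[atTop]
        (fun n : ℕ => (1:ℝ) * (n:ℝ)^(1-γ)) :=
      h1.mul (Asymptotics.isBigO_refl (fun n : ℕ => (n:ℝ)^(1-γ)) atTop)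
    simp only [one_mul] at h2
    exact h2.congr' heq2.symm EventuallyEq.rfl
  have hsum_nw : Summable (fun n : ℕ => (n:ℝ) * ecmW d γ n) :=
    summable_of_isBigO_nat (Real.summable_nat_rpow.mpr (by linarith)) hO2
  refine ⟨hsum_w, hsum_nw, ?_⟩
  -- the current diverges
  set a : ℕ → ℝ := fun n => ((n:ℝ) + d)^γ * ecmW d γ n with hadef
  have ha_nonneg : ∀ n, 0 ≤ a n := fun n => by
    have : (0:ℝ) ≤ (n:ℝ) + d := by positivity
    exact mul_nonneg (Real.rpow_nonneg this γ) (hw_nonneg n)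
  have hFa : ∀ n, F n ≤ a n := fun n => by
    apply mul_le_mul_of_nonneg_right _ (hw_nonneg n)
    exact Real.rpow_le_rpow (Nat.cast_nonneg n) (by linarith) (by linarith)
  have hF_nonneg : ∀ n, 0 ≤ F n := fun n =>
    mul_nonneg (Real.rpow_nonneg (Nat.cast_nonneg n) γ) (hw_nonneg n)
  have hnotsum : ¬ Summable F := by
    intro h
    have := tendsto_nhds_unique hF h.tendsto_atTop_zero
    exact hc.ne' this
  have hpsF : Tendsto (fun N => ∑ i ∈ Finset.range N, F i) atTop atTop :=
    (not_summable_iff_tendsto_nat_atTop_of_nonneg hF_nonneg).mp hnotsum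
  have hpsa : Tendsto (fun N => ∑ i ∈ Finset.range N, a i) atTop atTop :=
    tendsto_atTop_mono (fun N => Finset.sum_le_sum fun i _ => hFa i) hpsF
  -- a is bounded above
  obtain ⟨C, hC⟩ : ∃ C : ℝ, ∀ n, a n ≤ C := by
    obtain ⟨B, hB⟩ := hF.bddAbove_range
    refine ⟨max (a 0) ((1+d)^γ * B), fun n => ?_⟩
    cases n with
    | zero => exact le_max_left _ _
    | succ m =>
      refine le_trans ?_ (le_max_right _ _)
      have hn1 : (1:ℝ) ≤ ((m+1:ℕ):ℝ) := by exact_mod_cast Nat.one_le_iff_ne_zero.mpr (Nat.succ_ne_zero m)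
      have h1 : ((m+1:ℕ):ℝ) + d ≤ ((m+1:ℕ):ℝ) * (1+d) := by nlinarith
      have h2 : (((m+1:ℕ):ℝ) + d)^γ ≤ (1+d)^γ * ((m+1:ℕ):ℝ)^γ := by
        calc (((m+1:ℕ):ℝ) + d)^γ ≤ (((m+1:ℕ):ℝ) * (1+d))^γ :=
              Real.rpow_le_rpow (by positivity) h1 (by linarith)
          _ = ((m+1:ℕ):ℝ)^γ * (1+d)^γ := Real.mul_rpow (by positivity) (by linarith)
          _ = (1+d)^γ * ((m+1:ℕ):ℝ)^γ := by ring
      have hFB : F (m+1) ≤ B := hB (Set.mem_range_self (m+1))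
      have : a (m+1) ≤ (1+d)^γ * F (m+1) := by
        rw [hadef, hFdef]
        calc (((m+1:ℕ):ℝ) + d)^γ * ecmW d γ (m+1)
            ≤ ((1+d)^γ * ((m+1:ℕ):ℝ)^γ) * ecmW d γ (m+1) :=
              mul_le_mul_of_nonneg_right h2 (hw_nonneg _)
          _ = (1+d)^γ * (((m+1:ℕ):ℝ)^γ * ecmW d γ (m+1)) := by ring
      refine this.trans ?_
      exact mul_le_mul_of_nonneg_left hFB (Real.rpow_nonneg (by linarith) γ)
  have hsumaφ : ∀ φ : ℝ, 0 ≤ φ → φ < 1 → Summable (fun n : ℕ => a n * φ^n) := by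
    intro φ h0 h1
    apply Summable.of_nonneg_of_le
      (fun n => mul_nonneg (ha_nonneg n) (pow_nonneg h0 n))
      (fun n => mul_le_mul_of_nonneg_right (hC n) (pow_nonneg h0 n))
    exact (summable_geometric_of_lt_one h0 h1).mul_left C
  have hsumwφ : ∀ φ : ℝ, 0 ≤ φ → φ < 1 → Summable (fun n : ℕ => ecmW d γ n * φ^n) := by
    intro φ h0 h1
    apply Summable.of_nonneg_of_le
      (fun n => mul_nonneg (hw_nonneg n) (pow_nonneg h0 n))
      (fun n => ?_) hsum_w
    calc ecmW d γ n * φ^n ≤ ecmW d γ n * 1 :=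
          mul_le_mul_of_nonneg_left (pow_le_one₀ h0 h1.le) (hw_nonneg n)
      _ = ecmW d γ n := mul_one _
  set Z1 : ℝ := ∑' n, ecmW d γ n with hZ1def
  have hZ1ge1 : 1 ≤ Z1 := by
    have := Summable.le_tsum hsum_w 0 (fun i _ => hw_nonneg i)
    rwa [ecmW_zero] at this
  have hZ1pos : 0 < Z1 := by linarith
  set A : ℝ → ℝ := fun φ => ∑' n : ℕ, a n * φ^n with hAdef
  set Z : ℝ → ℝ := fun φ => ∑' n : ℕ, ecmW d γ n * φ^n with hZdef
  -- basic eventual facts on 𝓝[<] 1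
  have hev_half : ∀ᶠ φ in 𝓝[<] (1:ℝ), (1/2:ℝ) ≤ φ :=
    eventually_nhdsWithin_of_eventually_nhds (eventually_ge_nhds (by norm_num))
  have hev_lt1 : ∀ᶠ φ in 𝓝[<] (1:ℝ), φ < 1 := eventually_mem_nhdsWithin
  -- A → ∞
  have hA : Tendsto A (𝓝[<] (1:ℝ)) atTop := by
    rw [tendsto_atTop]
    intro K
    obtain ⟨N, hN⟩ := (hpsa.eventually_ge_atTop (K+1)).exists
    have hcont : Tendsto (fun φ : ℝ => ∑ i ∈ Finset.range N, a i * φ^i)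
        (𝓝[<] (1:ℝ)) (𝓝 (∑ i ∈ Finset.range N, a i * 1^i)) :=
      ((continuous_finset_sum _ (fun i _ => by continuity)).tendsto 1).mono_left
        nhdsWithin_le_nhds
    have hval : ∑ i ∈ Finset.range N, a i * (1:ℝ)^i = ∑ i ∈ Finset.range N, a i := by
      simp
    have hKlt : K < ∑ i ∈ Finset.range N, a i * (1:ℝ)^i := by
      rw [hval]; linarith
    have hev1 : ∀ᶠ φ in 𝓝[<] (1:ℝ), K < ∑ i ∈ Finset.range N, a i * φ^i :=
      hcont.eventually (eventually_gt_nhds hKlt)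
    filter_upwards [hev1, hev_half, hev_lt1] with φ h1 h2 h3
    have h0 : (0:ℝ) ≤ φ := by linarith
    have hle : ∑ i ∈ Finset.range N, a i * φ^i ≤ A φ :=
      Summable.sum_le_tsum _ (fun i _ => mul_nonneg (ha_nonneg i) (pow_nonneg h0 i))
        (hsumaφ φ h0 h3)
    linarith
  -- conclude
  have hAdiv : Tendsto (fun φ => A φ / Z1) (𝓝[<] (1:ℝ)) atTop :=
    hA.atTop_div_const hZ1pos
  have hsq : Tendsto (fun φ => (A φ / Z1)^2) (𝓝[<] (1:ℝ)) atTop := by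
    have := hAdiv.atTop_mul_atTop₀ hAdiv
    simpa [sq] using this
  have hhalf : Tendsto (fun φ => (1/2:ℝ) * (A φ / Z1)^2) (𝓝[<] (1:ℝ)) atTop :=
    hsq.const_mul_atTop (by norm_num)
  apply tendsto_atTop_mono' _ ?_ hhalf
  filter_upwards [hev_half, hev_lt1] with φ h2 h3
  have h0 : (0:ℝ) ≤ φ := by linarith
  have hZφ_ge1 : 1 ≤ Z φ := by
    have := Summable.le_tsum (hsumwφ φ h0 h3) 0
      (fun i _ => mul_nonneg (hw_nonneg i) (pow_nonneg h0 i))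
    simpa [ecmW_zero] using this
  have hZφ_le : Z φ ≤ Z1 := by
    apply Summable.tsum_le_tsum _ (hsumwφ φ h0 h3) hsum_w
    intro n
    calc ecmW d γ n * φ^n ≤ ecmW d γ n * 1 :=
          mul_le_mul_of_nonneg_left (pow_le_one₀ h0 h3.le) (hw_nonneg n)
      _ = ecmW d γ n := mul_one _
  have hAφ_nonneg : 0 ≤ A φ :=
    tsum_nonneg (fun n => mul_nonneg (ha_nonneg n) (pow_nonneg h0 n))
  have hdivle : A φ / Z1 ≤ A φ / Z φ :=
    div_le_div_of_nonneg_left hAφ_nonneg (by linarith) hZφ_le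
  have hsqle : (A φ / Z1)^2 ≤ (A φ / Z φ)^2 := by
    apply pow_le_pow_left₀ (by positivity) hdivle
  calc (1/2:ℝ) * (A φ / Z1)^2 ≤ φ * (A φ / Z φ)^2 := by
        apply mul_le_mul h2 hsqle (by positivity) (by linarith)
    _ = φ * ((∑' n : ℕ, ((n:ℝ) + d)^γ * ecmW d γ n * φ^n) /
          (∑' n : ℕ, ecmW d γ n * φ^n))^2 := by rw [hAdef, hZdef]
end

section
/- (i) If γ = 1, then n^b·w(n) → Γ(1+b) as n → ∞; consequently, for b > 2, z(1) = ∑_n w(n) < ∞ and ∑_n n·w(n) < ∞, so the critical density ρ_c = (∑_n n·w(n))/z(1) is finite (condensation). (ii) If γ ∈ (0,1), then n^{γ−1}·log w(n) → −b/(1−γ) as n → ∞ (stretched-exponential decay), and ∑_n n·w(n) < ∞ for every b > 0, so ρ_c < ∞. -/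
open Filter Topology

/-- Stationary weights of the zero-range process with rates `u(n) = 1 + b/n^γ`:
`w(n) = ∏_{k=1}^n (1 + b/k^γ)⁻¹`. -/
noncomputable def zrpCondW (b γ : ℝ) (n : ℕ) : ℝ :=
  ∏ k ∈ Finset.Icc 1 n, (1 + b / (k : ℝ) ^ γ)⁻¹

lemma zrp_factor_pos {b γ : ℝ} (hb : 0 < b) (k : ℕ) :
    (0:ℝ) < 1 + b / (k : ℝ) ^ γ := by
  have : (0:ℝ) ≤ b / (k:ℝ) ^ γ := by positivity
  linarith

lemma zrp_log {b γ : ℝ} (hb : 0 < b) (n : ℕ) :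
    Real.log (zrpCondW b γ n) = -∑ k ∈ Finset.Icc 1 n, Real.log (1 + b / (k:ℝ) ^ γ) := by
  rw [zrpCondW, Real.log_prod (fun k _ => inv_ne_zero (zrp_factor_pos hb k).ne')]
  rw [← Finset.sum_neg_distrib]
  exact Finset.sum_congr rfl fun k _ => Real.log_inv _

lemma log_term_bounds {b γ : ℝ} (hb : 0 < b) (hγ0 : 0 < γ) {q : ℝ} (hq : q ≤ 2*γ)
    {k : ℕ} (hk : 1 ≤ k) :
    b * (k:ℝ) ^ (-γ) - b^2 * (k:ℝ) ^ (-q) ≤ Real.log (1 + b / (k:ℝ) ^ γ) ∧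
    Real.log (1 + b / (k:ℝ) ^ γ) ≤ b * (k:ℝ) ^ (-γ) := by
  have hk1 : (1:ℝ) ≤ (k:ℝ) := by exact_mod_cast hk
  have hk0 : (0:ℝ) < (k:ℝ) := by linarith
  set x := b / (k:ℝ) ^ γ with hx
  have hxpos : 0 < x := by positivity
  have hxe : x = b * (k:ℝ) ^ (-γ) := by
    rw [hx, Real.rpow_neg hk0.le, div_eq_mul_inv]
  have hup : Real.log (1 + x) ≤ x := by
    have := Real.log_le_sub_one_of_pos (by linarith : (0:ℝ) < 1 + x)
    linarith
  have hlow : x - x^2 ≤ Real.log (1 + x) := by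
    have h1 : Real.log ((1 + x)⁻¹) ≤ (1 + x)⁻¹ - 1 :=
      Real.log_le_sub_one_of_pos (by positivity)
    rw [Real.log_inv] at h1
    have h2 : 1 - (1 + x)⁻¹ ≤ Real.log (1 + x) := by linarith
    refine le_trans ?_ h2
    have hx1 : (0:ℝ) < 1 + x := by linarith
    rw [inv_eq_one_div]
    have h3 : 1/(1+x) ≤ 1 - x + x^2 := by
      rw [div_le_iff₀ hx1]; nlinarith
    linarith
  have hsq : x^2 ≤ b^2 * (k:ℝ) ^ (-q) := by
    have e1 : x^2 = b^2 * (k:ℝ) ^ (-(2*γ)) := by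
      rw [hxe, mul_pow, ← Real.rpow_natCast ((k:ℝ) ^ (-γ)) 2, ← Real.rpow_mul hk0.le]
      norm_num
      left
      ring_nf
    rw [e1]
    have : (k:ℝ) ^ (-(2*γ)) ≤ (k:ℝ) ^ (-q) :=
      Real.rpow_le_rpow_of_exponent_le hk1 (by linarith)
    nlinarith [sq_nonneg b]
  exact ⟨by rw [← hxe]; nlinarith, by rw [← hxe]; exact hup⟩

lemma rpow_antitone {p : ℝ} (hp : 0 < p) (a : ℝ) :
    AntitoneOn (fun x : ℝ => x ^ (-p)) (Set.Icc 1 a) := by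
  intro x hx y hy hxy
  have hx0 : (0:ℝ) < x := lt_of_lt_of_le one_pos hx.1
  simp only [Real.rpow_neg (le_of_lt hx0), Real.rpow_neg (le_of_lt (hx0.trans_le hxy))]
  have := Real.rpow_le_rpow hx0.le hxy hp.le
  have hxp : (0:ℝ) < x ^ p := Real.rpow_pos_of_pos hx0 p
  exact inv_anti₀ hxp this

lemma integral_rpow_eval {p : ℝ} (hp1 : p < 1) (n : ℕ) :
    ∫ x in (1:ℝ)..(1 + (n:ℕ) : ℝ), x ^ (-p) = ((1 + (n:ℝ)) ^ (1 - p) - 1) / (1 - p) := by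
  rw [integral_rpow (Or.inl (by linarith : (-1:ℝ) < -p))]
  rw [Real.one_rpow]
  ring_nf

lemma sum_rpow_lower {p : ℝ} (hp0 : 0 < p) (hp1 : p < 1) (n : ℕ) :
    ((1 + (n:ℝ)) ^ (1 - p) - 1) / (1 - p) ≤ ∑ k ∈ Finset.Icc 1 n, (k:ℝ) ^ (-p) := by
  have h := (rpow_antitone hp0 (1 + (n:ℕ) : ℝ)).integral_le_sum
  rw [integral_rpow_eval hp1] at h
  refine h.trans (le_of_eq ?_)
  rw [← Finset.Ico_add_one_right_eq_Icc, Finset.sum_Ico_eq_sum_range,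
    show n + 1 - 1 = n from rfl]
  apply Finset.sum_congr rfl
  intro i _
  push_cast
  ring_nf

lemma sum_rpow_upper {p : ℝ} (hp0 : 0 < p) (hp1 : p < 1) (n : ℕ) :
    ∑ k ∈ Finset.Icc 1 n, (k:ℝ) ^ (-p) ≤ 1 + ((1 + (n:ℝ)) ^ (1 - p) - 1) / (1 - p) := by
  have h := (rpow_antitone hp0 (1 + (n:ℕ) : ℝ)).sum_le_integral
  rw [integral_rpow_eval hp1] at h
  have key : ∑ k ∈ Finset.Icc 1 n, (k:ℝ) ^ (-p)
      ≤ 1 + ∑ i ∈ Finset.range n, ((1:ℝ) + ((i:ℕ) + 1 : ℕ)) ^ (-p) := by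
    calc ∑ k ∈ Finset.Icc 1 n, (k:ℝ) ^ (-p)
        ≤ ∑ k ∈ Finset.Icc 1 (n+1), (k:ℝ) ^ (-p) := by
          apply Finset.sum_le_sum_of_subset_of_nonneg
          · exact Finset.Icc_subset_Icc_right (by omega)
          · intro k _ _
            positivity
      _ = ((1:ℕ):ℝ) ^ (-p) + ∑ k ∈ Finset.Ico 2 (n+2), (k:ℝ) ^ (-p) := by
          rw [← Finset.Ico_add_one_right_eq_Icc, Finset.sum_eq_sum_Ico_succ_bot (by omega : 1 < n + 1 + 1)]
      _ = 1 + ∑ i ∈ Finset.range n, ((1:ℝ) + ((i:ℕ) + 1 : ℕ)) ^ (-p) := by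
          rw [Finset.sum_Ico_eq_sum_range]
          simp only [Nat.cast_one, Real.one_rpow, show n + 2 - 2 = n from rfl]
          congr 1
          apply Finset.sum_congr rfl
          intro i _
          push_cast
          ring_nf
  exact key.trans (by linarith)

-- (n+1)^r * n^(-r) → 1
lemma ratio_rpow (r : ℝ) :
    Tendsto (fun n : ℕ => (n:ℝ) ^ (-r) * (1 + (n:ℝ)) ^ r) atTop (𝓝 1) := by
  have h1 : Tendsto (fun n : ℕ => (1 + (n:ℝ)) / (n:ℝ)) atTop (𝓝 1) := by
    have := (tendsto_const_nhds (α := ℕ) (f := atTop) (x := (1:ℝ))).add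
      (tendsto_inv_atTop_zero.comp (tendsto_natCast_atTop_atTop (R := ℝ)))
    rw [add_zero] at this
    refine this.congr' ?_
    filter_upwards [eventually_ge_atTop 1] with n hn
    have hn0 : (0:ℝ) < n := by exact_mod_cast hn
    simp only [Function.comp_apply]
    field_simp
    ring
  have h2 := h1.rpow_const (p := r) (Or.inl one_ne_zero)
  rw [Real.one_rpow] at h2
  refine h2.congr' ?_
  filter_upwards [eventually_ge_atTop 1] with n hn
  have hn0 : (0:ℝ) < n := by exact_mod_cast hn
  rw [Real.div_rpow (by linarith) hn0.le, div_eq_mul_inv, ← Real.rpow_neg hn0.le, mul_comm]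

lemma tendsto_rpow_nat_neg {r : ℝ} (hr : 0 < r) :
    Tendsto (fun n : ℕ => (n:ℝ) ^ (-r)) atTop (𝓝 0) :=
  (tendsto_rpow_neg_atTop hr).comp (tendsto_natCast_atTop_atTop (R := ℝ))

-- upper function limit pieces
lemma tendsto_upper {p c : ℝ} (hp0 : 0 < p) (hp1 : p < 1) (hc : c ≤ p) (hc0 : 0 < c) :
    Tendsto (fun n : ℕ => (n:ℝ) ^ (c-1) * (1 + ((1 + (n:ℝ)) ^ (1 - p) - 1) / (1 - p)))
      atTop (𝓝 (if c = p then 1/(1-p) else 0)) := by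
  have hA : Tendsto (fun n : ℕ => (n:ℝ) ^ (c-1)) atTop (𝓝 0) := by
    have := tendsto_rpow_nat_neg (r := 1 - c) (by linarith)
    simpa [neg_sub] using this
  have hB : Tendsto (fun n : ℕ => (n:ℝ) ^ (c-1) * (1 + (n:ℝ)) ^ (1-p))
      atTop (𝓝 (if c = p then 1 else 0)) := by
    rcases eq_or_lt_of_le hc with rfl | hlt
    · simp only [if_pos rfl]
      have := ratio_rpow (1 - c)
      simpa [neg_sub] using this
    · simp only [if_neg hlt.ne]
      have h1 := (tendsto_rpow_nat_neg (r := p - c) (by linarith)).mul (ratio_rpow (1-p))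
      rw [zero_mul] at h1
      refine h1.congr' ?_
      filter_upwards [eventually_ge_atTop 1] with n hn
      have hn0 : (0:ℝ) < n := by exact_mod_cast hn
      rw [show (n:ℝ) ^ (-(p - c)) * ((n:ℝ) ^ (-(1-p)) * (1 + (n:ℝ)) ^ (1-p))
        = ((n:ℝ) ^ (-(p-c)) * (n:ℝ) ^ (-(1-p))) * (1 + (n:ℝ)) ^ (1-p) from by ring,
        ← Real.rpow_add hn0, show -(p-c) + -(1-p) = c - 1 from by ring]
  have hcomb := (hA.add ((hB.sub hA).div_const (1-p)))
  have : (0:ℝ) + ((if c = p then 1 else 0) - 0)/(1-p) = (if c = p then 1/(1-p) else 0) := by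
    split <;> simp
  rw [this] at hcomb
  refine hcomb.congr fun n => ?_
  ring

lemma tendsto_sum_rpow {p : ℝ} (hp0 : 0 < p) (hp1 : p < 1) :
    Tendsto (fun n : ℕ => (n:ℝ) ^ (p-1) * ∑ k ∈ Finset.Icc 1 n, (k:ℝ) ^ (-p))
      atTop (𝓝 (1/(1-p))) := by
  have hu := tendsto_upper hp0 hp1 le_rfl hp0
  rw [if_pos rfl] at hu
  have hA : Tendsto (fun n : ℕ => (n:ℝ) ^ (p-1)) atTop (𝓝 0) := by
    have := tendsto_rpow_nat_neg (r := 1 - p) (by linarith)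
    simpa [neg_sub] using this
  have hl : Tendsto (fun n : ℕ =>
      (n:ℝ) ^ (p-1) * (((1 + (n:ℝ)) ^ (1 - p) - 1) / (1 - p))) atTop (𝓝 (1/(1-p))) := by
    have := hu.sub hA
    rw [sub_zero] at this
    refine this.congr fun n => ?_
    ring
  refine tendsto_of_tendsto_of_tendsto_of_le_of_le hl hu (fun n => ?_) (fun n => ?_)
  · exact mul_le_mul_of_nonneg_left (sum_rpow_lower hp0 hp1 n) (Real.rpow_nonneg (Nat.cast_nonneg n) _)
  · exact mul_le_mul_of_nonneg_left (sum_rpow_upper hp0 hp1 n) (Real.rpow_nonneg (Nat.cast_nonneg n) _)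

lemma tendsto_sum_rpow_err {c q : ℝ} (hc0 : 0 < c) (hcq : c < q) (hq1 : q < 1) :
    Tendsto (fun n : ℕ => (n:ℝ) ^ (c-1) * ∑ k ∈ Finset.Icc 1 n, (k:ℝ) ^ (-q))
      atTop (𝓝 0) := by
  have hu := tendsto_upper (hc0.trans hcq) hq1 hcq.le hc0
  rw [if_neg hcq.ne] at hu
  refine tendsto_of_tendsto_of_tendsto_of_le_of_le tendsto_const_nhds hu (fun n => ?_) (fun n => ?_)
  · have h1 : (0:ℝ) ≤ ∑ k ∈ Finset.Icc 1 n, (k:ℝ) ^ (-q) :=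
      Finset.sum_nonneg fun k _ => Real.rpow_nonneg (Nat.cast_nonneg k) _
    positivity
  · exact mul_le_mul_of_nonneg_left (sum_rpow_upper (hc0.trans hcq) hq1 n)
      (Real.rpow_nonneg (Nat.cast_nonneg n) _)
lemma summable_of_ev {f g : ℕ → ℝ} (hf : ∀ n, 0 ≤ f n)
    (h : ∀ᶠ n in atTop, f n ≤ g n) (hg : Summable g) : Summable f := by
  obtain ⟨N, hN⟩ := eventually_atTop.1 h
  rw [← summable_nat_add_iff N]
  refine Summable.of_nonneg_of_le (fun n => hf _) (fun n => hN _ (by omega)) ?_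
  exact (summable_nat_add_iff N).2 hg
lemma summ_i {b : ℝ} (hb2 : 2 < b) {w : ℕ → ℝ} (hw : ∀ n, 0 ≤ w n)
    (ht : Filter.Tendsto (fun n : ℕ => (n : ℝ) ^ b * w n) atTop (𝓝 (Real.Gamma (1 + b)))) :
    Summable w ∧ Summable (fun n : ℕ => (n : ℝ) * w n) := by
  have hb : (0:ℝ) < b := by linarith
  set C := Real.Gamma (1 + b) + 1 with hC
  have hev : ∀ᶠ n : ℕ in atTop, (n : ℝ) ^ b * w n ≤ C := by
    have := ht.eventually_le_const (by simp [hC] : Real.Gamma (1+b) < C)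
    exact this
  constructor
  · refine summable_of_ev hw ?_ ((Real.summable_nat_rpow.2 (by linarith : -b < -1)).mul_left C)
    filter_upwards [hev, eventually_ge_atTop 1] with n hn h1
    have hn0 : (0:ℝ) < n := by exact_mod_cast h1
    have : w n = ((n:ℝ) ^ b * w n) * (n:ℝ) ^ (-b) := by
      rw [mul_comm ((n:ℝ)^b) (w n), mul_assoc, ← Real.rpow_add hn0]
      simp
    rw [this]
    have h2 : (0:ℝ) ≤ (n:ℝ) ^ (-b) := Real.rpow_nonneg hn0.le _
    exact mul_le_mul_of_nonneg_right hn h2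
  · refine summable_of_ev (fun n => mul_nonneg (Nat.cast_nonneg n) (hw n)) ?_
      ((Real.summable_nat_rpow.2 (by linarith : 1-b < -1)).mul_left C)
    filter_upwards [hev, eventually_ge_atTop 1] with n hn h1
    have hn0 : (0:ℝ) < n := by exact_mod_cast h1
    have : (n:ℝ) * w n = ((n:ℝ) ^ b * w n) * (n:ℝ) ^ (1-b) := by
      rw [mul_comm ((n:ℝ)^b) (w n), mul_assoc, ← Real.rpow_add hn0]
      simp [Real.rpow_one, mul_comm]
    rw [this]
    exact mul_le_mul_of_nonneg_right hn (Real.rpow_nonneg hn0.le _)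
lemma zrpCondW_pos {b γ : ℝ} (hb : 0 < b) (n : ℕ) : 0 < zrpCondW b γ n := by
  exact Finset.prod_pos fun k _ => inv_pos.2 (zrp_factor_pos hb k)

lemma zrp_eq_gammaSeq {b : ℝ} (hb : 0 < b) (n : ℕ) :
    (n : ℝ) ^ b * zrpCondW b 1 n = b * Real.GammaSeq b n := by
  have h1 : ∀ k ∈ Finset.Icc 1 n, (1 + b / (k : ℝ) ^ (1:ℝ))⁻¹ = (k:ℝ) / ((k:ℝ) + b) := by
    intro k hk
    have hk1 : 1 ≤ k := (Finset.mem_Icc.1 hk).1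
    have hk0 : (0:ℝ) < k := by exact_mod_cast hk1
    rw [Real.rpow_one]
    field_simp
  rw [zrpCondW, Finset.prod_congr rfl h1, Finset.prod_div_distrib]
  have h2 : ∏ k ∈ Finset.Icc 1 n, (k:ℝ) = (n.factorial : ℝ) := by
    rw [← Nat.cast_prod]
    norm_cast
    rw [← Finset.Ico_add_one_right_eq_Icc, Finset.prod_Ico_id_eq_factorial]
  have h3 : ∏ j ∈ Finset.range (n + 1), (b + (j:ℝ)) = b * ∏ k ∈ Finset.Icc 1 n, ((k:ℝ) + b) := by
    rw [Finset.prod_range_succ', ← Finset.Ico_add_one_right_eq_Icc, Finset.prod_Ico_eq_prod_range]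
    simp only [Nat.cast_zero, add_zero, Nat.add_sub_cancel]
    rw [mul_comm]
    congr 1
    apply Finset.prod_congr rfl
    intro i _
    push_cast
    ring
  rw [Real.GammaSeq, h2, h3]
  have hP : (0:ℝ) < ∏ k ∈ Finset.Icc 1 n, ((k:ℝ) + b) := by
    apply Finset.prod_pos; intro k hk
    have hk1 : 1 ≤ k := (Finset.mem_Icc.1 hk).1
    have : (0:ℝ) < k := by exact_mod_cast hk1
    linarith
  field_simp

lemma zrp_tendsto_gamma {b : ℝ} (hb : 0 < b) :
    Filter.Tendsto (fun n : ℕ => (n : ℝ) ^ b * zrpCondW b 1 n) atTop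
      (𝓝 (Real.Gamma (1 + b))) := by
  have h := (Real.GammaSeq_tendsto_Gamma b).const_mul b
  have : b * Real.Gamma b = Real.Gamma (1 + b) := by
    rw [add_comm, Real.Gamma_add_one hb.ne']
  rw [← this]
  exact h.congr fun n => (zrp_eq_gammaSeq hb n).symm

lemma zrp_tendsto_ii {b γ : ℝ} (hb : 0 < b) (hγ0 : 0 < γ) (hγ1 : γ < 1) :
    Tendsto (fun n : ℕ => (n : ℝ) ^ (γ - 1) * Real.log (zrpCondW b γ n)) atTop
      (𝓝 (-b / (1 - γ))) := by
  set q : ℝ := min (2*γ) ((1+γ)/2) with hqdef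
  have hγq : γ < q := lt_min (by linarith) (by linarith)
  have hq1 : q < 1 := (min_le_right _ _).trans_lt (by linarith)
  have hq2γ : q ≤ 2*γ := min_le_left _ _
  set T : ℕ → ℝ := fun n => ∑ k ∈ Finset.Icc 1 n, Real.log (1 + b / (k:ℝ) ^ γ) with hT
  have hub : ∀ n, T n ≤ b * ∑ k ∈ Finset.Icc 1 n, (k:ℝ) ^ (-γ) := by
    intro n
    rw [Finset.mul_sum]
    exact Finset.sum_le_sum fun k hk =>
      (log_term_bounds hb hγ0 hq2γ (Finset.mem_Icc.1 hk).1).2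
  have hlb : ∀ n : ℕ, b * (∑ k ∈ Finset.Icc 1 n, (k:ℝ) ^ (-γ))
      - b^2 * (∑ k ∈ Finset.Icc 1 n, (k:ℝ) ^ (-q)) ≤ T n := by
    intro n
    rw [Finset.mul_sum, Finset.mul_sum, ← Finset.sum_sub_distrib]
    exact Finset.sum_le_sum fun k hk =>
      (log_term_bounds hb hγ0 hq2γ (Finset.mem_Icc.1 hk).1).1
  have htop : Tendsto (fun n : ℕ =>
      (n:ℝ) ^ (γ-1) * (b * ∑ k ∈ Finset.Icc 1 n, (k:ℝ) ^ (-γ))) atTop (𝓝 (b/(1-γ))) := by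
    have := (tendsto_sum_rpow hγ0 hγ1).const_mul b
    rw [show b * (1/(1-γ)) = b/(1-γ) from by ring] at this
    exact this.congr fun n => by ring
  have herr := (tendsto_sum_rpow_err hγ0 hγq hq1).const_mul (b^2)
  rw [mul_zero] at herr
  have hbot : Tendsto (fun n : ℕ => (n:ℝ) ^ (γ-1) *
      (b * (∑ k ∈ Finset.Icc 1 n, (k:ℝ) ^ (-γ)) - b^2 * (∑ k ∈ Finset.Icc 1 n, (k:ℝ) ^ (-q))))
      atTop (𝓝 (b/(1-γ))) := by
    have := htop.sub herr
    rw [sub_zero] at this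
    exact this.congr fun n => by ring
  have hTlim : Tendsto (fun n : ℕ => (n:ℝ) ^ (γ-1) * T n) atTop (𝓝 (b/(1-γ))) := by
    refine tendsto_of_tendsto_of_tendsto_of_le_of_le hbot htop (fun n => ?_) (fun n => ?_)
    · exact mul_le_mul_of_nonneg_left (hlb n) (Real.rpow_nonneg (Nat.cast_nonneg n) _)
    · exact mul_le_mul_of_nonneg_left (hub n) (Real.rpow_nonneg (Nat.cast_nonneg n) _)
  have := hTlim.neg
  rw [← neg_div] at this
  exact this.congr fun n => by rw [zrp_log hb]; ring

lemma summ_ii {b γ : ℝ} (hb : 0 < b) (hγ0 : 0 < γ) (hγ1 : γ < 1) :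
    Summable (zrpCondW b γ) ∧ Summable (fun n : ℕ => (n : ℝ) * zrpCondW b γ n) := by
  set c : ℝ := b/(2*(1-γ)) with hcdef
  have h1γ : (0:ℝ) < 1 - γ := by linarith
  have hc : 0 < c := by positivity
  have hlt : -b/(1-γ) < -c := by
    rw [hcdef, neg_div]
    rw [neg_lt_neg_iff, div_lt_div_iff₀ (by linarith) (by positivity)]
    nlinarith
  have hev1 : ∀ᶠ n : ℕ in atTop, (n:ℝ) ^ (γ-1) * Real.log (zrpCondW b γ n) ≤ -c :=
    (zrp_tendsto_ii hb hγ0 hγ1).eventually_le_const hlt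
  have hwb : ∀ᶠ n : ℕ in atTop, zrpCondW b γ n ≤ Real.exp (-c * (n:ℝ) ^ (1-γ)) := by
    filter_upwards [hev1, eventually_ge_atTop 1] with n hn h1
    have hn0 : (0:ℝ) < n := by exact_mod_cast h1
    have hpow : (n:ℝ) ^ (1-γ) * (n:ℝ) ^ (γ-1) = 1 := by
      rw [← Real.rpow_add hn0]; norm_num
    have hlog : Real.log (zrpCondW b γ n) ≤ -c * (n:ℝ) ^ (1-γ) := by
      have h2 := mul_le_mul_of_nonneg_left hn (Real.rpow_nonneg hn0.le (1-γ))
      calc Real.log (zrpCondW b γ n)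
          = (n:ℝ) ^ (1-γ) * ((n:ℝ) ^ (γ-1) * Real.log (zrpCondW b γ n)) := by
            rw [← mul_assoc, hpow, one_mul]
        _ ≤ (n:ℝ) ^ (1-γ) * (-c) := h2
        _ = -c * (n:ℝ) ^ (1-γ) := by ring
    calc zrpCondW b γ n = Real.exp (Real.log (zrpCondW b γ n)) :=
          (Real.exp_log (zrpCondW_pos hb n)).symm
      _ ≤ Real.exp (-c * (n:ℝ) ^ (1-γ)) := Real.exp_le_exp.2 hlog
  have h3 : Tendsto (fun n : ℕ =>
      ((n:ℝ) ^ (1-γ)) ^ (3/(1-γ)) * Real.exp (-c * (n:ℝ) ^ (1-γ))) atTop (𝓝 0) :=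
    (tendsto_rpow_mul_exp_neg_mul_atTop_nhds_zero (3/(1-γ)) c hc).comp
      ((tendsto_rpow_atTop h1γ).comp (tendsto_natCast_atTop_atTop (R := ℝ)))
  have h4 : Tendsto (fun n : ℕ =>
      (n:ℝ) ^ (3:ℕ) * Real.exp (-c * (n:ℝ) ^ (1-γ))) atTop (𝓝 0) := by
    refine h3.congr' ?_
    filter_upwards [eventually_ge_atTop 1] with n hn
    have hn0 : (0:ℝ) < n := by exact_mod_cast hn
    rw [← Real.rpow_natCast (n:ℝ) 3, ← Real.rpow_mul hn0.le,
      show (1-γ) * (3/(1-γ)) = ((3:ℕ):ℝ) from by field_simp; norm_num]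
  have hev2 : ∀ᶠ n : ℕ in atTop,
      (n:ℝ) ^ (3:ℕ) * Real.exp (-c * (n:ℝ) ^ (1-γ)) ≤ 1 :=
    h4.eventually_le_const one_pos
  have hsum2 : Summable (fun n : ℕ => (n : ℝ) * zrpCondW b γ n) := by
    refine summable_of_ev (fun n => mul_nonneg (Nat.cast_nonneg n) (zrpCondW_pos hb n).le)
      ?_ (Real.summable_nat_rpow.2 (by norm_num : (-2:ℝ) < -1))
    filter_upwards [hwb, hev2, eventually_ge_atTop 1] with n hw h2 h1
    have hn0 : (0:ℝ) < n := by exact_mod_cast h1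
    have e1 : (n:ℝ) ^ (-2:ℝ) = ((n:ℝ) ^ (2:ℕ))⁻¹ := by
      rw [show (-2:ℝ) = -((2:ℕ):ℝ) from by norm_num, Real.rpow_neg hn0.le, Real.rpow_natCast]
    rw [e1, inv_eq_one_div, le_div_iff₀ (by positivity)]
    have hE : (0:ℝ) < Real.exp (-c * (n:ℝ) ^ (1-γ)) := Real.exp_pos _
    calc (n:ℝ) * zrpCondW b γ n * (n:ℝ)^(2:ℕ)
        ≤ (n:ℝ) * Real.exp (-c * (n:ℝ) ^ (1-γ)) * (n:ℝ)^(2:ℕ) := by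
          have := mul_le_mul_of_nonneg_left hw hn0.le
          exact mul_le_mul_of_nonneg_right this (by positivity)
      _ = (n:ℝ) ^ (3:ℕ) * Real.exp (-c * (n:ℝ) ^ (1-γ)) := by ring
      _ ≤ 1 := h2
  refine ⟨?_, hsum2⟩
  refine summable_of_ev (fun n => (zrpCondW_pos hb n).le) ?_ hsum2
  filter_upwards [eventually_ge_atTop 1] with n h1
  have hn1 : (1:ℝ) ≤ n := by exact_mod_cast h1
  exact le_mul_of_one_le_left (zrpCondW_pos hb n).le hn1

/-- (i) For `γ = 1` the stationary weights have power-law decay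
`n^b·w(n) → Γ(1+b)`, and for `b > 2` both `z(1) = ∑ w(n)` and `∑ n·w(n)` converge, so
the critical density `ρ_c = (∑ n·w(n))/z(1)` is finite (condensation). (ii) For
`γ ∈ (0,1)` the weights have stretched-exponential decay,
`n^{γ−1}·log w(n) → −b/(1−γ)`, and `∑ w(n) < ∞`, `∑ n·w(n) < ∞` for every `b > 0`,
so `ρ_c < ∞`. -/
theorem zrp_condensation_weights (b γ : ℝ) (hb : 0 < b) (hγ0 : 0 < γ) (hγ1 : γ ≤ 1) :
    (γ = 1 →
      Tendsto (fun n : ℕ => (n : ℝ) ^ b * zrpCondW b 1 n) atTop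
        (𝓝 (Real.Gamma (1 + b))) ∧
      (2 < b → Summable (zrpCondW b 1) ∧
        Summable (fun n : ℕ => (n : ℝ) * zrpCondW b 1 n))) ∧
    (γ < 1 →
      Tendsto (fun n : ℕ => (n : ℝ) ^ (γ - 1) * Real.log (zrpCondW b γ n)) atTop
        (𝓝 (-b / (1 - γ))) ∧
      Summable (zrpCondW b γ) ∧
      Summable (fun n : ℕ => (n : ℝ) * zrpCondW b γ n)) := by
  refine ⟨fun _ => ⟨zrp_tendsto_gamma hb, fun hb2 => ?_⟩, fun hlt =>
    ⟨zrp_tendsto_ii hb hγ0 hlt, summ_ii hb hγ0 hlt⟩⟩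
  exact summ_i hb2 (fun n => (zrpCondW_pos hb n).le) (zrp_tendsto_gamma hb)
end

section
/- (i) For every φ ∈ (0, 1/λ_1), the limiting density R(φ) := lim_{L→∞} (1/L)·∑_{x=1}^L λ_x φ/(1 − λ_x φ) exists and equals φ/(1−φ). (ii) Consequently the critical density ρ_c = lim_{φ↗1/λ_1} R(φ) = 1/(λ_1 − 1) is finite, i.e. the system with a decreasing-to-one speed profile exhibits condensation with φ_c = 1/λ_1. -/
open Filter Topology

/-- Condensation for a deterministic speed profile `λ_x → 1` with maximal value
`λ_1 > 1` attained at the first site, for the inhomogeneous zero-range process with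
geometric marginals of mean `R_x(φ) = λ_x φ/(1 − λ_x φ)`:
(i) for every `φ ∈ (0, 1/λ_1)` the limiting density
`R(φ) = lim_L (1/L)∑_{x=1}^L λ_x φ/(1 − λ_x φ)` exists and equals `φ/(1−φ)`;
(ii) consequently the critical density
`ρ_c = lim_{φ↗1/λ_1} R(φ) = 1/(λ_1 − 1)` is finite: the system exhibits condensation
with `φ_c = 1/λ_1`. -/
theorem decreasing_profile_condensation
    (lam : ℕ → ℝ) (hlampos : ∀ x, 0 < lam x)
    (hlamtend : Tendsto lam atTop (𝓝 1))
    (hlammax : ∀ x, lam x ≤ lam 0) (hlam1 : 1 < lam 0) :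
    (∀ φ : ℝ, 0 < φ → φ < (lam 0)⁻¹ →
      Tendsto (fun L : ℕ =>
          (∑ x ∈ Finset.range L, lam x * φ / (1 - lam x * φ)) / L)
        atTop (𝓝 (φ / (1 - φ)))) ∧
    Tendsto (fun φ : ℝ => φ / (1 - φ)) (𝓝[<] (lam 0)⁻¹)
      (𝓝 (1 / (lam 0 - 1))) := by
  constructor
  · intro φ hφ0 hφ
    have hφ1 : φ < 1 := lt_trans hφ (by
      rw [inv_lt_one_iff₀]; right; exact hlam1)
    have hterm : Tendsto (fun x => lam x * φ / (1 - lam x * φ)) atTop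
        (𝓝 (φ / (1 - φ))) := by
      have h1 : Tendsto (fun x => lam x * φ) atTop (𝓝 φ) := by
        simpa using hlamtend.mul_const φ
      have h2 : Tendsto (fun x => 1 - lam x * φ) atTop (𝓝 (1 - φ)) :=
        tendsto_const_nhds.sub h1
      exact h1.div h2 (by linarith)
    have := hterm.cesaro
    refine this.congr (fun n => ?_)
    rw [div_eq_inv_mul]
  · have hc : ContinuousAt (fun φ : ℝ => φ / (1 - φ)) (lam 0)⁻¹ := by
      have hne : (1 : ℝ) - (lam 0)⁻¹ ≠ 0 := by
        have : (lam 0)⁻¹ < 1 := by rw [inv_lt_one_iff₀]; right; exact hlam1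
        linarith
      exact (continuousAt_id).div (continuousAt_const.sub continuousAt_id) hne
    have hval : (lam 0)⁻¹ / (1 - (lam 0)⁻¹) = 1 / (lam 0 - 1) := by
      have h0 : lam 0 ≠ 0 := (hlampos 0).ne'
      field_simp
    have := hc.tendsto.mono_left (nhdsWithin_le_nhds : 𝓝[<] (lam 0)⁻¹ ≤ 𝓝 (lam 0)⁻¹)
    rwa [hval] at this
end
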